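/- arXiv:2005.00421 — 4 statements merged into one kernel-verified Lean document; each statement's English description precedes it below -/
import Mathlib

section
/- A Borel measurable function α : [1,∞) → (0,∞) belongs to the class RO (i.e., there exist b > 1 and c ≥ 1 such that c⁻¹ ≤ α(λt)/α(t) ≤ c for all t ≥ 1 and λ ∈ [1,b]) if and only if α admits a representation α(t) = exp(β(t) + ∫₁ᵗ γ(τ)/τ dτ) for t ≥ 1, where β and γ are Borel measurable real-valued functions bounded on [1,∞). -/
noncomputable section
open MeasureTheory Filter Set Real

lemma ro_aux_extend (f : ℝ → ℝ) (hf : Measurable fun t : Set.Ici (1:ℝ) => f t.1) :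
    ∃ g : ℝ → ℝ, Measurable g ∧ (∀ t, 1 ≤ t → g t = f t) ∧ (∀ t, t < 1 → g t = 0) := by
  refine ⟨Function.extend (Subtype.val) (fun t : Set.Ici (1:ℝ) => f t.1) (fun _ => 0),
    (MeasurableEmbedding.subtype_coe measurableSet_Ici).measurable_extend hf measurable_const,
    fun t ht => ?_, fun t ht => ?_⟩
  · exact Subtype.coe_injective.extend_apply _ _ (⟨t, ht⟩ : Set.Ici (1:ℝ))
  · refine Function.extend_apply' _ _ _ ?_
    rintro ⟨a, rfl⟩
    exact absurd a.2 (not_le.2 ht)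

lemma ro_aux_integrableOn {g : ℝ → ℝ} (hg : Measurable g) {a b C : ℝ}
    (hC : ∀ x ∈ Set.Ioc a b, |g x| ≤ C) : IntegrableOn g (Set.Ioc a b) := by
  refine Measure.integrableOn_of_bounded (M := C) measure_Ioc_lt_top.ne hg.aestronglyMeasurable ?_
  refine (ae_restrict_iff' measurableSet_Ioc).2 (Eventually.of_forall fun x hx => ?_)
  simpa [Real.norm_eq_abs] using hC x hx

lemma ro_aux_intervalIntegrable {g : ℝ → ℝ} (hg : Measurable g) {a b C : ℝ} (hab : a ≤ b)
    (hC : ∀ x ∈ Set.Ioc a b, |g x| ≤ C) : IntervalIntegrable g volume a b :=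
  (intervalIntegrable_iff_integrableOn_Ioc_of_le hab).2 (ro_aux_integrableOn hg hC)

lemma ro_aux_ii {g : ℝ → ℝ} (hg : Measurable g) {C : ℝ} (hC : ∀ x, |g x| ≤ C) (a b : ℝ) :
    IntervalIntegrable g volume a b := by
  rw [intervalIntegrable_iff]
  have hlt : volume (Set.uIoc a b) ≠ ⊤ := by
    rw [Set.uIoc]; exact measure_Ioc_lt_top.ne
  exact Measure.integrableOn_of_bounded (M := C) hlt hg.aestronglyMeasurable
    (Eventually.of_forall fun x => by simpa [Real.norm_eq_abs] using hC x)


/-- Class RO of RO-varying (in the sense of Avakumović) functions at infinity: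
Borel measurable on `[1,∞)`, positive there, with `c⁻¹ ≤ α(l*t)/α(t) ≤ c`
for all `t ≥ 1`, `l ∈ [1,b]`. -/
def RO (α : ℝ → ℝ) : Prop :=
  (∀ t, 1 ≤ t → 0 < α t) ∧ (Measurable fun t : Set.Ici (1:ℝ) => α t.1) ∧
  ∃ b : ℝ, 1 < b ∧ ∃ c : ℝ, 1 ≤ c ∧ ∀ t, 1 ≤ t → ∀ l, 1 ≤ l → l ≤ b →
    c⁻¹ ≤ α (l * t) / α t ∧ α (l * t) / α t ≤ c

/-- Exponents admitting a lower power bound `c * l^s ≤ α(l*t)/α(t)`. -/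
def roLowerSet (α : ℝ → ℝ) : Set ℝ :=
  {s | ∃ c : ℝ, 0 < c ∧ ∀ t, 1 ≤ t → ∀ l, 1 ≤ l → c * l ^ s ≤ α (l * t) / α t}

/-- Exponents admitting an upper power bound `α(l*t)/α(t) ≤ c * l^s`. -/
def roUpperSet (α : ℝ → ℝ) : Set ℝ :=
  {s | ∃ c : ℝ, 0 < c ∧ ∀ t, 1 ≤ t → ∀ l, 1 ≤ l → α (l * t) / α t ≤ c * l ^ s}

/-- Lower Matuszewska index. -/
def sigma0 (α : ℝ → ℝ) : ℝ := sSup (roLowerSet α)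

/-- Upper Matuszewska index. -/
def sigma1 (α : ℝ → ℝ) : ℝ := sInf (roUpperSet α)

/-- Representation theorem for the class RO: `α ∈ RO` iff
`α(t) = exp(β(t) + ∫₁ᵗ γ(τ)/τ dτ)` for `t ≥ 1` with `β, γ` Borel measurable and
bounded on `[1,∞)`. -/
theorem ro_representation (α : ℝ → ℝ) :
    RO α ↔
    ∃ β γ : ℝ → ℝ, (Measurable fun t : Set.Ici (1:ℝ) => β t.1) ∧
      (Measurable fun t : Set.Ici (1:ℝ) => γ t.1) ∧
      (∃ M : ℝ, ∀ t, 1 ≤ t → |β t| ≤ M ∧ |γ t| ≤ M) ∧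
      (∀ t, 1 ≤ t → α t = Real.exp (β t + ∫ τ in Set.Ioc (1:ℝ) t, γ τ / τ)) := by
  constructor
  · intro h
    obtain ⟨hpos, hmeas, b, hb, c, hc, hbd⟩ := h
    have hb1 : (1:ℝ) ≤ b := hb.le
    have hb0 : (0:ℝ) < b := lt_trans one_pos hb
    have hlogb : 0 < Real.log b := Real.log_pos hb
    have hc0 : (0:ℝ) < c := lt_of_lt_of_le one_pos hc
    have hlogc : 0 ≤ Real.log c := Real.log_nonneg hc
    obtain ⟨A, hA, hAeq, hA0⟩ := ro_aux_extend (fun t => Real.log (α t))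
      (Real.measurable_log.comp hmeas)
    -- key single-step bound
    have hkey : ∀ t, 1 ≤ t → ∀ σ, t ≤ σ → σ ≤ b * t → |A σ - A t| ≤ Real.log c := by
      intro t ht σ hσ1 hσ2
      have ht0 : (0:ℝ) < t := lt_of_lt_of_le one_pos ht
      set l := σ / t with hl
      have hl1 : 1 ≤ l := (one_le_div ht0).2 hσ1
      have hlb : l ≤ b := (div_le_iff₀ ht0).2 hσ2
      have hσt : σ = l * t := by rw [hl]; field_simp
      have h1σ : (1:ℝ) ≤ σ := le_trans ht hσ1
      obtain ⟨hlo, hhi⟩ := hbd t ht l hl1 hlb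
      have hαt := hpos t ht
      have hαlt : 0 < α (l * t) := by rw [← hσt]; exact hpos σ h1σ
      have hratpos : 0 < α (l * t) / α t := div_pos hαlt hαt
      rw [hAeq σ h1σ, hAeq t ht, hσt, ← Real.log_div hαlt.ne' hαt.ne', abs_le]
      constructor
      · have h1 : Real.log c⁻¹ ≤ Real.log (α (l*t) / α t) :=
          Real.log_le_log (by positivity) hlo
        rw [Real.log_inv] at h1
        linarith
      · exact Real.log_le_log hratpos hhi
    -- iterated bound
    have hchain : ∀ n : ℕ, ∀ t, 1 ≤ t → ∀ σ, t ≤ σ → σ ≤ b ^ n * t →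
        |A σ - A t| ≤ n * Real.log c := by
      intro n
      induction n with
      | zero =>
        intro t ht σ h1 h2
        rw [pow_zero, one_mul] at h2
        have : σ = t := le_antisymm h2 h1
        simp [this]
      | succ n ih =>
        intro t ht σ h1 h2
        by_cases hcase : σ ≤ b ^ n * t
        · refine le_trans (ih t ht σ h1 hcase) ?_
          have : (n:ℝ) ≤ (n:ℝ) + 1 := by linarith
          push_cast
          nlinarith
        · push_neg at hcase
          have hbn1 : (1:ℝ) ≤ b ^ n := one_le_pow₀ hb1
          have ht0 : (0:ℝ) < t := lt_of_lt_of_le one_pos ht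
          have h3 : t ≤ b ^ n * t := le_mul_of_one_le_left ht0.le hbn1
          have ht' : (1:ℝ) ≤ b ^ n * t := le_trans ht h3
          have hσb : σ ≤ b * (b ^ n * t) := by
            rw [← mul_assoc, ← pow_succ']
            exact h2
          have e1 := hkey (b ^ n * t) ht' σ hcase.le hσb
          have e2 := ih t ht (b ^ n * t) h3 le_rfl
          calc |A σ - A t| ≤ |A σ - A (b ^ n * t)| + |A (b ^ n * t) - A t| := abs_sub_le _ _ _
            _ ≤ Real.log c + n * Real.log c := add_le_add e1 e2
            _ = (n + 1 : ℕ) * Real.log c := by push_cast; ring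
    -- local boundedness of A
    have hAloc : ∀ T, 1 ≤ T → ∃ C, 0 ≤ C ∧ ∀ σ ∈ Set.Icc (1:ℝ) T, |A σ| ≤ C := by
      intro T hT
      obtain ⟨n, hn⟩ := pow_unbounded_of_one_lt T hb
      refine ⟨|A 1| + n * Real.log c, by positivity, fun σ hσ => ?_⟩
      have h1 := hchain n 1 le_rfl σ hσ.1 (by rw [mul_one]; exact le_trans hσ.2 hn.le)
      calc |A σ| = |A σ - A 1 + A 1| := by ring_nf
        _ ≤ |A σ - A 1| + |A 1| := abs_add_le _ _
        _ ≤ |A 1| + n * Real.log c := by linarith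
    -- define gamma
    set γ : ℝ → ℝ := fun τ => if 1 ≤ τ then (A (b * τ) - A τ) / Real.log b else 0 with hγ
    have hγm : Measurable γ := Measurable.ite measurableSet_Ici
      (((hA.comp (measurable_const_mul b)).sub hA).div_const _) measurable_const
    have hγbd : ∀ τ, |γ τ| ≤ Real.log c / Real.log b := by
      intro τ
      by_cases h1 : 1 ≤ τ
      · have hτb : τ ≤ b * τ := le_mul_of_one_le_left (by linarith) hb1
        have h2 := hkey τ h1 (b * τ) hτb le_rfl
        rw [hγ]
        simp only [if_pos h1]
        rw [abs_div, abs_of_pos hlogb]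
        gcongr
      · rw [hγ]
        simp only [if_neg h1]
        rw [abs_zero]
        positivity
    -- integrand
    set gg : ℝ → ℝ := fun τ => γ τ / τ with hgg
    have hggm : Measurable gg := hγm.div measurable_id
    have hggbd : ∀ τ, |gg τ| ≤ Real.log c / Real.log b := by
      intro τ
      by_cases h1 : 1 ≤ τ
      · have hτ0 : (0:ℝ) < τ := lt_of_lt_of_le one_pos h1
        have hτ1 : (1:ℝ) ≤ |τ| := by rw [abs_of_pos hτ0]; exact h1
        calc |gg τ| = |γ τ| / |τ| := abs_div _ _
          _ ≤ |γ τ| := div_le_self (abs_nonneg _) hτ1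
          _ ≤ Real.log c / Real.log b := hγbd τ
      · have : γ τ = 0 := by rw [hγ]; simp [h1]
        simp only [hgg]
        rw [this]
        simp only [zero_div, abs_zero]
        positivity
    -- beta
    set β : ℝ → ℝ := fun t => A t - ∫ τ in Set.Ioc (1:ℝ) t, γ τ / τ with hβ
    refine ⟨β, γ, ?_, hγm.comp measurable_subtype_coe, ?_, ?_⟩
    · -- measurability of β
      have hH : Continuous fun x => ∫ τ in (1:ℝ)..x, gg τ :=
        intervalIntegral.continuous_primitive (fun a b => ro_aux_ii hggm hggbd a b) 1
      have heq : (fun t : Set.Ici (1:ℝ) => β t.1) =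
          fun t : Set.Ici (1:ℝ) => A t.1 - ∫ τ in (1:ℝ)..t.1, gg τ := by
        funext t
        rw [hβ]
        simp only
        rw [intervalIntegral.integral_of_le t.2]
      rw [heq]
      exact (hA.comp measurable_subtype_coe).sub (hH.measurable.comp measurable_subtype_coe)
    · -- boundedness
      obtain ⟨Cb, hCb0, hCb⟩ := hAloc b hb1
      refine ⟨max ((Real.log c * (b - 1) + Cb * (b - 1)) / Real.log b) (Real.log c / Real.log b),
        fun t ht => ⟨?_, le_max_of_le_right (hγbd t)⟩⟩
      apply le_max_of_le_left
      have ht0 : (0:ℝ) < t := lt_of_lt_of_le one_pos ht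
      have htbt : t ≤ b * t := le_mul_of_one_le_left ht0.le hb1
      have h1bt : (1:ℝ) ≤ b * t := le_trans ht htbt
      obtain ⟨CT, hCT0, hCT⟩ := hAloc (b * t) h1bt
      -- interval integrability facts
      have hint : ∀ p q : ℝ, 1 ≤ p → p ≤ q → q ≤ b * t →
          IntervalIntegrable (fun σ => A σ / σ) volume p q := by
        intro p q hp hpq hq
        refine ro_aux_intervalIntegrable (C := CT) (hA.div measurable_id) hpq (fun x hx => ?_)
        have hx1 : (1:ℝ) ≤ x := le_trans hp hx.1.le
        have hx0 : (0:ℝ) < x := lt_of_lt_of_le one_pos hx1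
        have hx2 : x ≤ b * t := le_trans hx.2 hq
        have hAx := hCT x ⟨hx1, hx2⟩
        calc |A x / x| = |A x| / |x| := abs_div _ _
          _ ≤ |A x| := div_le_self (abs_nonneg _) (by rw [abs_of_pos hx0]; exact hx1)
          _ ≤ CT := hAx
      -- Step B: express the integral
      have hI1 : IntervalIntegrable (fun τ => A (b * τ) / τ) volume 1 t := by
        refine ro_aux_intervalIntegrable (C := CT) ((hA.comp (measurable_const_mul b)).div measurable_id)
          ht (fun x hx => ?_)
        have hx1 : (1:ℝ) ≤ x := hx.1.le
        have hx0 : (0:ℝ) < x := lt_of_lt_of_le one_pos hx1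
        have hbx1 : (1:ℝ) ≤ b * x := le_trans hx1 (le_mul_of_one_le_left (by linarith) hb1)
        have hbx2 : b * x ≤ b * t := mul_le_mul_of_nonneg_left hx.2 hb0.le
        have hAx := hCT (b * x) ⟨hbx1, hbx2⟩
        calc |A (b * x) / x| = |A (b * x)| / |x| := abs_div _ _
          _ ≤ |A (b * x)| := div_le_self (abs_nonneg _) (by rw [abs_of_pos hx0]; exact hx1)
          _ ≤ CT := hAx
      have hI2 : IntervalIntegrable (fun τ => A τ / τ) volume 1 t := hint 1 t le_rfl ht htbt
      have step1 : (∫ τ in Set.Ioc (1:ℝ) t, γ τ / τ) = ∫ τ in (1:ℝ)..t, gg τ :=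
        (intervalIntegral.integral_of_le ht).symm
      have step2 : (∫ τ in (1:ℝ)..t, gg τ) =
          (Real.log b)⁻¹ * ((∫ τ in (1:ℝ)..t, A (b * τ) / τ) - ∫ τ in (1:ℝ)..t, A τ / τ) := by
        rw [← intervalIntegral.integral_sub hI1 hI2, ← intervalIntegral.integral_const_mul]
        refine intervalIntegral.integral_congr (fun τ hτ => ?_)
        rw [Set.uIcc_of_le ht] at hτ
        have hτ1 : (1:ℝ) ≤ τ := hτ.1
        have hτ0 : (0:ℝ) < τ := lt_of_lt_of_le one_pos hτ1
        simp only [hgg, hγ, if_pos hτ1]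
        field_simp
      -- Step C : substitution
      have step3 : (∫ τ in (1:ℝ)..t, A (b * τ) / τ) = ∫ σ in b..(b * t), A σ / σ := by
        have e1 : (∫ τ in (1:ℝ)..t, A (b * τ) / τ) =
            b • ∫ τ in (1:ℝ)..t, (fun σ => A σ / σ) (b * τ) := by
          rw [← intervalIntegral.integral_smul]
          refine intervalIntegral.integral_congr (fun τ hτ => ?_)
          rw [Set.uIcc_of_le ht] at hτ
          have hτ0 : (0:ℝ) < τ := lt_of_lt_of_le one_pos hτ.1
          simp only [smul_eq_mul]
          field_simp
        have e2 := intervalIntegral.smul_integral_comp_mul_left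
          (f := fun σ => A σ / σ) (a := (1:ℝ)) (b := t) b
        rw [e1]
        simpa using e2
      -- adjacent interval additivity
      have hbbt : b ≤ b * t := le_mul_of_one_le_right hb0.le ht
      have hadd1 : (∫ σ in (1:ℝ)..b, A σ / σ) + (∫ σ in b..(b*t), A σ / σ)
          = ∫ σ in (1:ℝ)..(b*t), A σ / σ :=
        intervalIntegral.integral_add_adjacent_intervals (hint 1 b le_rfl hb1 hbbt)
          (hint b (b*t) hb1 hbbt le_rfl)
      have hadd2 : (∫ σ in (1:ℝ)..t, A σ / σ) + (∫ σ in t..(b*t), A σ / σ)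
          = ∫ σ in (1:ℝ)..(b*t), A σ / σ :=
        intervalIntegral.integral_add_adjacent_intervals (hint 1 t le_rfl ht htbt)
          (hint t (b*t) ht htbt le_rfl)
      -- constant integral
      have hconst : (∫ σ in t..(b*t), A t / σ) = A t * Real.log b := by
        have h0 : (0:ℝ) ∉ Set.uIcc t (b*t) := by
          rw [Set.uIcc_of_le htbt]
          intro h0
          exact absurd h0.1 (by linarith)
        have e1 : (∫ σ in t..(b*t), A t / σ) = A t * ∫ σ in t..(b*t), σ⁻¹ := by
          rw [← intervalIntegral.integral_const_mul]
          refine intervalIntegral.integral_congr (fun σ _ => ?_)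
          rw [div_eq_mul_inv]
        rw [e1, integral_inv h0]
        congr 1
        rw [mul_div_assoc, div_self ht0.ne', mul_one]
      -- integrability of the constant-numerator integrand
      have hIc : IntervalIntegrable (fun σ => A t / σ) volume t (b*t) := by
        refine ro_aux_intervalIntegrable (C := |A t|) (measurable_const.div measurable_id) htbt (fun x hx => ?_)
        have hx1 : (1:ℝ) ≤ x := le_trans ht hx.1.le
        have hx0 : (0:ℝ) < x := lt_of_lt_of_le one_pos hx1
        calc |A t / x| = |A t| / |x| := abs_div _ _
          _ ≤ |A t| := div_le_self (abs_nonneg _) (by rw [abs_of_pos hx0]; exact hx1)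
      have hsub : (∫ σ in t..(b*t), A t / σ) - (∫ σ in t..(b*t), A σ / σ)
          = ∫ σ in t..(b*t), (A t - A σ) / σ := by
        rw [← intervalIntegral.integral_sub hIc (hint t (b*t) ht htbt le_rfl)]
        refine intervalIntegral.integral_congr (fun σ _ => ?_)
        rw [sub_div]
      -- the representation of β t
      have hβt : β t = (Real.log b)⁻¹ *
          ((∫ σ in t..(b*t), (A t - A σ) / σ) + ∫ σ in (1:ℝ)..b, A σ / σ) := by
        rw [hβ]
        simp only
        rw [step1, step2, step3]
        field_simp
        linarith [hadd1, hadd2, hconst, hsub]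
      -- bounds on the two pieces
      have hmid : |∫ σ in t..(b*t), (A t - A σ) / σ| ≤ Real.log c * (b - 1) := by
        have hbnd : ∀ x ∈ Set.uIoc t (b*t), ‖(A t - A x) / x‖ ≤ Real.log c / t := by
          intro x hx
          rw [Set.uIoc_of_le htbt] at hx
          have hx1 : (1:ℝ) ≤ x := le_trans ht hx.1.le
          have hx0 : (0:ℝ) < x := lt_of_lt_of_le one_pos hx1
          have hA1 := hkey t ht x hx.1.le hx.2
          rw [Real.norm_eq_abs, abs_div, abs_sub_comm, abs_of_pos hx0]
          exact div_le_div₀ hlogc hA1 ht0 hx.1.le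
        have h2 := intervalIntegral.norm_integral_le_of_norm_le_const hbnd
        rw [Real.norm_eq_abs] at h2
        refine le_trans h2 ?_
        have : |b * t - t| = t * (b - 1) := by
          rw [abs_of_nonneg (by nlinarith)]
          ring
        rw [this]
        rw [div_mul_eq_mul_div, mul_comm t (b-1), ← mul_assoc, mul_div_assoc,
          div_self ht0.ne', mul_one]
      have hcb : |∫ σ in (1:ℝ)..b, A σ / σ| ≤ Cb * (b - 1) := by
        have hbnd : ∀ x ∈ Set.uIoc 1 b, ‖A x / x‖ ≤ Cb := by
          intro x hx
          rw [Set.uIoc_of_le hb1] at hx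
          have hx1 : (1:ℝ) ≤ x := hx.1.le
          have hx0 : (0:ℝ) < x := lt_of_lt_of_le one_pos hx1
          rw [Real.norm_eq_abs]
          calc |A x / x| = |A x| / |x| := abs_div _ _
            _ ≤ |A x| := div_le_self (abs_nonneg _) (by rw [abs_of_pos hx0]; exact hx1)
            _ ≤ Cb := hCb x ⟨hx1, hx.2⟩
        have h2 := intervalIntegral.norm_integral_le_of_norm_le_const hbnd
        rw [Real.norm_eq_abs] at h2
        refine le_trans h2 ?_
        rw [abs_of_nonneg (by linarith)]
      -- combine
      rw [hβt, abs_mul, abs_of_pos (inv_pos.2 hlogb), div_eq_inv_mul]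
      have habs : |(∫ σ in t..(b*t), (A t - A σ) / σ) + ∫ σ in (1:ℝ)..b, A σ / σ|
          ≤ Real.log c * (b - 1) + Cb * (b - 1) :=
        le_trans (abs_add_le _ _) (add_le_add hmid hcb)
      exact mul_le_mul_of_nonneg_left habs (inv_pos.2 hlogb).le
    · intro t ht
      rw [hβ]
      simp only
      rw [sub_add_cancel, hAeq t ht, Real.exp_log (hpos t ht)]
  · intro h
    obtain ⟨β, γ, hβm, hγm, ⟨M, hM⟩, hrep⟩ := h
    obtain ⟨g, hgm, hgeq, hg0⟩ := ro_aux_extend γ hγm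
    have hM0 : 0 ≤ M := le_trans (abs_nonneg _) (hM 1 le_rfl).1
    set gg : ℝ → ℝ := fun τ => g τ / τ with hgg
    have hggm : Measurable gg := hgm.div measurable_id
    have hggbd : ∀ τ, |gg τ| ≤ M := by
      intro τ
      by_cases h1 : 1 ≤ τ
      · have hτ0 : (0:ℝ) < τ := lt_of_lt_of_le one_pos h1
        have : |gg τ| = |g τ| / |τ| := abs_div _ _
        rw [this, hgeq τ h1]
        have hτ1 : (1:ℝ) ≤ |τ| := by rw [abs_of_pos hτ0]; exact h1
        calc |γ τ| / |τ| ≤ |γ τ| := div_le_self (abs_nonneg _) hτ1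
          _ ≤ M := (hM τ h1).2
      · simp [hgg, hg0 τ (not_le.1 h1), hM0]
    -- pointwise bound on Ioc with 1 ≤ p
    have hbd' : ∀ p : ℝ, 1 ≤ p → ∀ x ∈ Set.Ioc p (2*p) , |gg x| ≤ M / p := by
      intro p hp x hx
      have hx1 : (1:ℝ) ≤ x := le_trans hp hx.1.le
      have hx0 : (0:ℝ) < x := lt_of_lt_of_le one_pos hx1
      have hp0 : (0:ℝ) < p := lt_of_lt_of_le one_pos hp
      have : |gg x| = |g x| / |x| := abs_div _ _
      rw [this, hgeq x hx1, abs_of_pos hx0]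
      calc |γ x| / x ≤ M / x := by gcongr; exact (hM x hx1).2
        _ ≤ M / p := by gcongr; exact hx.1.le
    -- the integral over Ioc 1 t equals integral of gg
    have hieq : ∀ t : ℝ, (∫ τ in Set.Ioc (1:ℝ) t, γ τ / τ) = ∫ τ in Set.Ioc (1:ℝ) t, gg τ := by
      intro t
      refine setIntegral_congr_fun measurableSet_Ioc fun τ hτ => ?_
      simp [hgg, hgeq τ hτ.1.le]
    have hpos : ∀ t, 1 ≤ t → 0 < α t := fun t ht => by
      rw [hrep t ht]; exact Real.exp_pos _
    refine ⟨hpos, ?_, 2, one_lt_two, Real.exp (3*M), ?_, ?_⟩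
    · -- measurability
      have hH : Continuous fun x => ∫ τ in (1:ℝ)..x, gg τ :=
        intervalIntegral.continuous_primitive (fun a b => ro_aux_ii hggm hggbd a b) 1
      have : (fun t : Set.Ici (1:ℝ) => α t.1) =
          fun t : Set.Ici (1:ℝ) => Real.exp (β t.1 + ∫ τ in (1:ℝ)..t.1, gg τ) := by
        funext t
        rw [hrep t.1 t.2, hieq, intervalIntegral.integral_of_le t.2]
      rw [this]
      exact Real.measurable_exp.comp (hβm.add (hH.measurable.comp measurable_subtype_coe))
    · rw [← Real.exp_zero]
      exact Real.exp_le_exp.2 (by linarith)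
    · intro t ht l hl1 hl2
      have ht0 : (0:ℝ) < t := lt_of_lt_of_le one_pos ht
      have hlt1 : (1:ℝ) ≤ l * t := le_trans ht (le_mul_of_one_le_left ht0.le hl1)
      have htlt : t ≤ l * t := le_mul_of_one_le_left ht0.le hl1
      -- split integral
      have hi1 : IntegrableOn gg (Set.Ioc 1 t) := ro_aux_integrableOn hggm fun x _ => hggbd x
      have hi2 : IntegrableOn gg (Set.Ioc t (l*t)) := ro_aux_integrableOn hggm fun x _ => hggbd x
      have hsplit : (∫ τ in Set.Ioc (1:ℝ) (l*t), gg τ) =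
          (∫ τ in Set.Ioc (1:ℝ) t, gg τ) + ∫ τ in Set.Ioc t (l*t), gg τ := by
        rw [← setIntegral_union (Set.Ioc_disjoint_Ioc_of_le le_rfl) measurableSet_Ioc hi1 hi2,
          Set.Ioc_union_Ioc_eq_Ioc ht htlt]
      -- bound the middle piece
      have hmid : |∫ τ in Set.Ioc t (l*t), gg τ| ≤ M := by
        have hb : ∀ x ∈ Set.Ioc t (l*t), ‖gg x‖ ≤ M / t := by
          intro x hx
          rw [Real.norm_eq_abs]
          refine hbd' t ht x ⟨hx.1, le_trans hx.2 ?_⟩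
          exact mul_le_mul_of_nonneg_right hl2 ht0.le
        have := norm_setIntegral_le_of_norm_le_const (μ := volume)
          (measure_Ioc_lt_top) hb
        rw [Real.norm_eq_abs] at this
        refine le_trans this ?_
        rw [measureReal_def, Real.volume_Ioc, ENNReal.toReal_ofReal (by nlinarith)]
        have : M / t * (l * t - t) = M * (l - 1) := by field_simp
        rw [this]
        nlinarith
      -- conclude
      have hrat : α (l*t) / α t = Real.exp ((β (l*t) - β t) + ∫ τ in Set.Ioc t (l*t), gg τ) := by
        rw [hrep (l*t) hlt1, hrep t ht, ← Real.exp_sub, hieq, hieq, hsplit]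
        congr 1
        ring
      rw [hrat]
      have h1 := (hM (l*t) hlt1).1
      have h2 := (hM t ht).1
      have habs : |(β (l*t) - β t) + ∫ τ in Set.Ioc t (l*t), gg τ| ≤ 3*M := by
        calc |(β (l*t) - β t) + ∫ τ in Set.Ioc t (l*t), gg τ|
            ≤ |β (l*t) - β t| + |∫ τ in Set.Ioc t (l*t), gg τ| := abs_add_le _ _
          _ ≤ (|β (l*t)| + |β t|) + M := add_le_add (abs_sub _ _) hmid
          _ ≤ 3*M := by linarith
      rw [abs_le] at habs
      constructor
      · rw [← Real.exp_neg]
        exact Real.exp_le_exp.2 habs.1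
      · exact Real.exp_le_exp.2 habs.2
end
end

section
/- Let α ∈ RO satisfy the Hörmander integrability condition ∫₁^∞ t^{2l+n-1} α(t)^{-2} dt < ∞ for a nonnegative integer l. Then every w ∈ H^α(ℝⁿ) coincides (as a distribution) with a function of class C^l(ℝⁿ), and moreover the derivatives of order ≤ l are bounded: there exists C > 0 with sup_{|β|≤l} ‖∂^β w‖_∞ ≤ C ‖w‖_α. -/
noncomputable section
open MeasureTheory Filter Set Real

open scoped ENNReal NNReal

abbrev Eucl (n : ℕ) := EuclideanSpace ℝ (Fin n)

/-- The smoothed modulus `⟨ξ⟩ = (1+|ξ|²)^{1/2}`. -/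
def jap {n : ℕ} (ξ : Eucl n) : ℝ := Real.sqrt (1 + ‖ξ‖ ^ 2)

/-- The norm of the generalized Sobolev space `H^α(ℝⁿ)` computed on the
Fourier-transform side: `‖w‖_α = (∫ α(⟨ξ⟩)² |ŵ(ξ)|² dξ)^{1/2}`, as an `ℝ≥0∞` value. -/
def HnormE {n : ℕ} (α : ℝ → ℝ) (W : Eucl n → ℂ) : ℝ≥0∞ :=
  (∫⁻ ξ, ENNReal.ofReal ((α (jap ξ)) ^ 2) * (‖W ξ‖₊ : ℝ≥0∞) ^ 2) ^ (1/2 : ℝ)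

open scoped FourierTransform

section Aux
open Metric

lemma jap_one_le {n : ℕ} (ξ : Eucl n) : 1 ≤ jap ξ := by
  rw [jap]
  have h := Real.sq_sqrt (show (0:ℝ) ≤ 1 + ‖ξ‖ ^ 2 by positivity)
  nlinarith [Real.sqrt_nonneg (1 + ‖ξ‖ ^ 2), sq_nonneg ‖ξ‖]

lemma jap_pos {n : ℕ} (ξ : Eucl n) : 0 < jap ξ := lt_of_lt_of_le one_pos (jap_one_le ξ)

lemma norm_le_jap {n : ℕ} (ξ : Eucl n) : ‖ξ‖ ≤ jap ξ := by
  rw [jap]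
  have h := Real.sq_sqrt (show (0:ℝ) ≤ 1 + ‖ξ‖ ^ 2 by positivity)
  nlinarith [Real.sqrt_nonneg (1 + ‖ξ‖ ^ 2), norm_nonneg ξ]

lemma jap_continuous {n : ℕ} : Continuous (jap (n := n)) :=
  Real.continuous_sqrt.comp (continuous_const.add (continuous_norm.pow 2))

lemma jap_eq_of_norm {n : ℕ} (ξ : Eucl n) : jap ξ = Real.sqrt (1 + ‖ξ‖ ^ 2) := rfl

-- RO iteration
lemma ro_iter {α : ℝ → ℝ} {b c : ℝ} (hb : 1 < b) (hc : 1 ≤ c)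
    (hpos : ∀ t, 1 ≤ t → 0 < α t)
    (h : ∀ t, 1 ≤ t → ∀ l, 1 ≤ l → l ≤ b → c⁻¹ ≤ α (l * t) / α t) :
    ∀ k : ℕ, ∀ t, 1 ≤ t → ∀ l, 1 ≤ l → l ≤ b ^ k → (c ^ k)⁻¹ * α t ≤ α (l * t) := by
  intro k
  induction k with
  | zero =>
    intro t ht l hl hlb
    have : l = 1 := le_antisymm (by simpa using hlb) hl
    simp [this]
  | succ k ih =>
    intro t ht l hl hlb
    have hc0 : (0:ℝ) < c := lt_of_lt_of_le one_pos hc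
    by_cases hcase : l ≤ b ^ k
    · calc (c ^ (k+1))⁻¹ * α t ≤ (c ^ k)⁻¹ * α t := by
            apply mul_le_mul_of_nonneg_right _ (hpos t ht).le
            exact inv_anti₀ (by positivity) (pow_le_pow_right₀ hc (Nat.le_succ k))
        _ ≤ α (l * t) := ih t ht l hl hcase
    · push_neg at hcase
      have hbk : (0:ℝ) < b ^ k := by positivity
      have h1 : 1 ≤ l / b ^ k := (one_le_div hbk).2 hcase.le
      have h2 : l / b ^ k ≤ b := by
        rw [div_le_iff₀ hbk]
        rw [pow_succ] at hlb
        linarith [hlb]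
      have hbt : 1 ≤ b ^ k * t := one_le_mul_of_one_le_of_one_le (one_le_pow₀ hb.le) ht
      have key := h (b ^ k * t) hbt (l / b ^ k) h1 h2
      have e : (l / b ^ k) * (b ^ k * t) = l * t := by field_simp
      rw [e] at key
      have hαbt : 0 < α (b ^ k * t) := hpos _ hbt
      have k2 : c⁻¹ * α (b ^ k * t) ≤ α (l * t) := by
        rw [le_div_iff₀ hαbt] at key
        exact key
      have k3 := ih t ht (b ^ k) (one_le_pow₀ hb.le) le_rfl
      calc (c ^ (k+1))⁻¹ * α t = c⁻¹ * ((c ^ k)⁻¹ * α t) := by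
            rw [pow_succ, mul_inv]; ring
        _ ≤ c⁻¹ * α (b ^ k * t) := by
            exact mul_le_mul_of_nonneg_left k3 (by positivity)
        _ ≤ α (l * t) := k2

lemma lintegral_fun_norm_eucl {n : ℕ} (hn : 1 ≤ n) (g : ℝ → ℝ≥0∞) (hg : Measurable g) :
    ∫⁻ x : EuclideanSpace ℝ (Fin n), g ‖x‖ =
      (volume : Measure (EuclideanSpace ℝ (Fin n))).toSphere univ *
        ∫⁻ r in Ioi (0:ℝ), ENNReal.ofReal (r ^ (n - 1)) * g r := by
  haveI : Nontrivial (EuclideanSpace ℝ (Fin n)) := by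
    have h : Module.finrank ℝ (EuclideanSpace ℝ (Fin n)) = n := finrank_euclideanSpace_fin
    exact Module.nontrivial_of_finrank_pos (R := ℝ) (by omega)
  have hdim : Module.finrank ℝ (EuclideanSpace ℝ (Fin n)) = n := finrank_euclideanSpace_fin
  set μ : Measure (EuclideanSpace ℝ (Fin n)) := volume with hμ
  have h1 : ∫⁻ x : ({(0 : EuclideanSpace ℝ (Fin n))}ᶜ : Set _), g ‖x.1‖
      ∂(μ.comap Subtype.val) = ∫⁻ x, g ‖x‖ ∂μ := by
    rw [lintegral_subtype_comap (measurableSet_singleton _).compl (fun x => g ‖x‖),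
      restrict_compl_singleton]
  have hmeas : Measurable fun p : sphere (0 : EuclideanSpace ℝ (Fin n)) 1 × Ioi (0:ℝ) =>
      g p.2.1 := hg.comp (measurable_subtype_coe.comp measurable_snd)
  have h2 := (Measure.measurePreserving_homeomorphUnitSphereProd μ).lintegral_comp hmeas
  have h3 : ∫⁻ x : ({(0 : EuclideanSpace ℝ (Fin n))}ᶜ : Set _), g ‖x.1‖
      ∂(μ.comap Subtype.val)
      = ∫⁻ a : ({(0 : EuclideanSpace ℝ (Fin n))}ᶜ : Set _),
        g (((homeomorphUnitSphereProd (EuclideanSpace ℝ (Fin n))) a).2 : ℝ)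
        ∂(μ.comap Subtype.val) := lintegral_congr fun a => by simp
  rw [← h1, h3, h2]
  have hg' : Measurable fun r : Ioi (0:ℝ) => g r.1 := hg.comp measurable_subtype_coe
  have hd : Measurable fun r : Ioi (0:ℝ) => ENNReal.ofReal (r.1 ^ (n - 1)) :=
    (measurable_subtype_coe.pow_const _).ennreal_ofReal
  have h4 : ∫⁻ p : sphere (0 : EuclideanSpace ℝ (Fin n)) 1 × Ioi (0:ℝ), g p.2.1
      ∂(μ.toSphere.prod (Measure.volumeIoiPow (Module.finrank ℝ (EuclideanSpace ℝ (Fin n)) - 1)))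
      = μ.toSphere univ * ∫⁻ r : Ioi (0:ℝ), g r.1
        ∂(Measure.volumeIoiPow (n - 1)) := by
    rw [hdim]
    rw [lintegral_prod _ hmeas.aemeasurable]
    simp [lintegral_const, mul_comm]
  have h5 : ∫⁻ r : Ioi (0:ℝ), g r.1 ∂(Measure.volumeIoiPow (n - 1))
      = ∫⁻ r in Ioi (0:ℝ), ENNReal.ofReal (r ^ (n - 1)) * g r := by
    rw [Measure.volumeIoiPow, lintegral_withDensity_eq_lintegral_mul _ hd hg']
    rw [← lintegral_subtype_comap measurableSet_Ioi
      (fun r => ENNReal.ofReal (r ^ (n - 1)) * g r)]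
    exact lintegral_congr fun a => by simp
  rw [h4, h5]

lemma one_le_sqrt_one_add (r : ℝ) : 1 ≤ Real.sqrt (1 + r ^ 2) := by
  have h := Real.sq_sqrt (show (0:ℝ) ≤ 1 + r ^ 2 by positivity)
  nlinarith [Real.sqrt_nonneg (1 + r ^ 2), sq_nonneg r]

lemma alpha_meas_comp {α : ℝ → ℝ} (hmα : Measurable fun t : Set.Ici (1:ℝ) => α t.1) :
    Measurable fun r : ℝ => α (Real.sqrt (1 + r ^ 2)) := by
  have hc : Continuous fun r : ℝ => Real.sqrt (1 + r ^ 2) :=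
    Real.continuous_sqrt.comp (continuous_const.add (continuous_pow 2))
  have hψ : Measurable fun r : ℝ => (⟨Real.sqrt (1 + r ^ 2), one_le_sqrt_one_add r⟩ :
      Set.Ici (1:ℝ)) := hc.measurable.subtype_mk
  exact hmα.comp hψ

lemma K_lt_top (n l : ℕ) (hn : 1 ≤ n) (α : ℝ → ℝ)
    (hpos : ∀ t, 1 ≤ t → 0 < α t)
    (hmα : Measurable fun t : Set.Ici (1:ℝ) => α t.1)
    {b c : ℝ} (hb : 1 < b) (hc : 1 ≤ c)
    (hro : ∀ t, 1 ≤ t → ∀ lam, 1 ≤ lam → lam ≤ b → c⁻¹ ≤ α (lam * t) / α t)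
    (hint : IntegrableOn
      (fun t : ℝ => t ^ (2 * (l : ℝ) + n - 1) * ((α t)⁻¹) ^ 2) (Set.Ici 1)) :
    ∫⁻ ξ : EuclideanSpace ℝ (Fin n),
      ENNReal.ofReal ((Real.sqrt (1 + ‖ξ‖ ^ 2) ^ l *
        (α (Real.sqrt (1 + ‖ξ‖ ^ 2)))⁻¹) ^ 2) < ⊤ := by
  have hc0 : (0:ℝ) < c := lt_of_lt_of_le one_pos hc
  -- choose k₀ with √2 ≤ b ^ k₀
  obtain ⟨k₀, hk₀⟩ : ∃ k : ℕ, Real.sqrt 2 ≤ b ^ k := by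
    obtain ⟨k, hk⟩ := pow_unbounded_of_one_lt (Real.sqrt 2) hb
    exact ⟨k, hk.le⟩
  have hiter := ro_iter hb hc hpos hro k₀
  set m : ℝ := (c ^ k₀)⁻¹ * α 1 with hm
  have hm0 : 0 < m := by
    apply mul_pos (by positivity) (hpos 1 le_rfl)
  have hlow : ∀ s : ℝ, 1 ≤ s → s ≤ b ^ k₀ → m ≤ α s := by
    intro s h1 h2
    have := hiter 1 le_rfl s h1 h2
    simpa using this
  -- the radial function
  set G : ℝ → ℝ≥0∞ := fun r =>
    ENNReal.ofReal ((Real.sqrt (1 + r ^ 2) ^ l * (α (Real.sqrt (1 + r ^ 2)))⁻¹) ^ 2) with hG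
  have hGmeas : Measurable G := by
    have h1 : Continuous fun r : ℝ => Real.sqrt (1 + r ^ 2) :=
      Real.continuous_sqrt.comp (continuous_const.add (continuous_pow 2))
    exact ((((h1.measurable.pow_const l)).mul
      (alpha_meas_comp hmα).inv).pow_const 2).ennreal_ofReal
  have hrw : (∫⁻ ξ : EuclideanSpace ℝ (Fin n),
      ENNReal.ofReal ((Real.sqrt (1 + ‖ξ‖ ^ 2) ^ l *
        (α (Real.sqrt (1 + ‖ξ‖ ^ 2)))⁻¹) ^ 2)) = ∫⁻ ξ : EuclideanSpace ℝ (Fin n), G ‖ξ‖ :=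
    rfl
  rw [hrw, lintegral_fun_norm_eucl hn G hGmeas]
  have hS : (volume : Measure (EuclideanSpace ℝ (Fin n))).toSphere univ < ⊤ :=
    measure_lt_top _ _
  refine ENNReal.mul_lt_top hS ?_
  rw [← Ioc_union_Ioi_eq_Ioi (zero_le_one (α := ℝ)),
    lintegral_union measurableSet_Ioi (Ioc_disjoint_Ioi le_rfl)]
  have partA : ∫⁻ r in Ioc (0:ℝ) 1, ENNReal.ofReal (r ^ (n - 1)) * G r < ⊤ := by
    have bound : ∀ r ∈ Ioc (0:ℝ) 1,
        ENNReal.ofReal (r ^ (n-1)) * G r ≤ ENNReal.ofReal ((Real.sqrt 2 ^ l * m⁻¹) ^ 2) := by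
      intro r hr
      have h1 : 1 ≤ Real.sqrt (1 + r ^ 2) := one_le_sqrt_one_add r
      have h2 : Real.sqrt (1 + r ^ 2) ≤ Real.sqrt 2 := by
        apply Real.sqrt_le_sqrt; nlinarith [hr.1.le, hr.2]
      have h3 : m ≤ α (Real.sqrt (1 + r ^ 2)) := hlow _ h1 (h2.trans hk₀)
      have h4 : (α (Real.sqrt (1 + r ^ 2)))⁻¹ ≤ m⁻¹ := inv_anti₀ hm0 h3
      have h5 : Real.sqrt (1 + r ^ 2) ^ l ≤ Real.sqrt 2 ^ l :=
        pow_le_pow_left₀ (Real.sqrt_nonneg _) h2 l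
      calc ENNReal.ofReal (r ^ (n-1)) * G r
          ≤ 1 * ENNReal.ofReal ((Real.sqrt 2 ^ l * m⁻¹) ^ 2) := by
            apply mul_le_mul'
            · exact ENNReal.ofReal_le_one.2 (pow_le_one₀ hr.1.le hr.2)
            · apply ENNReal.ofReal_le_ofReal
              apply pow_le_pow_left₀ (mul_nonneg (pow_nonneg (Real.sqrt_nonneg _) _)
                (inv_nonneg.2 (hpos _ h1).le)) ?_ 2
              exact mul_le_mul h5 h4 (inv_nonneg.2 (hpos _ h1).le) (by positivity)
        _ = _ := one_mul _
    calc ∫⁻ r in Ioc (0:ℝ) 1, ENNReal.ofReal (r ^ (n-1)) * G r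
        ≤ ∫⁻ _ in Ioc (0:ℝ) 1, ENNReal.ofReal ((Real.sqrt 2 ^ l * m⁻¹) ^ 2) := by
          apply lintegral_mono_ae
          filter_upwards [ae_restrict_mem measurableSet_Ioc] with r hr using bound r hr
      _ = ENNReal.ofReal ((Real.sqrt 2 ^ l * m⁻¹) ^ 2) * volume (Ioc (0:ℝ) 1) :=
          setLIntegral_const _ _
      _ < ⊤ := ENNReal.mul_lt_top ENNReal.ofReal_lt_top (by simp [Real.volume_Ioc])
  have partB : ∫⁻ r in Ioi (1:ℝ), ENNReal.ofReal (r ^ (n - 1)) * G r < ⊤ := by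
    have hfin : ∫⁻ t in Ici (1:ℝ),
        ENNReal.ofReal (t ^ (2*l+n-1) * ((α t)⁻¹) ^ 2) < ⊤ := by
      have h2 := hint.2
      rw [HasFiniteIntegral] at h2
      refine lt_of_le_of_lt ?_ h2
      apply lintegral_mono_ae
      filter_upwards [ae_restrict_mem measurableSet_Ici] with t ht
      have h0 : (0:ℝ) < t := lt_of_lt_of_le one_pos ht
      have he : t ^ (2*l+n-1 : ℕ) = t ^ (2 * (l:ℝ) + n - 1) := by
        rw [show (2 * (l:ℝ) + n - 1) = ((2*l+n-1 : ℕ):ℝ) by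
          push_cast [Nat.cast_sub (show 1 ≤ 2*l+n by omega)]; ring]
        rw [Real.rpow_natCast]
      rw [Real.enorm_eq_ofReal_abs]
      apply ENNReal.ofReal_le_ofReal
      calc t ^ (2*l+n-1 : ℕ) * ((α t)⁻¹) ^ 2
          = t ^ (2 * (l:ℝ) + n - 1) * ((α t)⁻¹) ^ 2 := by rw [he]
        _ ≤ |t ^ (2 * (l:ℝ) + n - 1) * ((α t)⁻¹) ^ 2| := le_abs_self _
    have key : ∀ r ∈ Ioi (1:ℝ),
        ENNReal.ofReal (r ^ (n-1)) * G r ≤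
          ENNReal.ofReal (2 ^ l * c ^ (2*k₀)) *
            ENNReal.ofReal (r ^ (2*l+n-1) * ((α r)⁻¹) ^ 2) := by
      intro r hr
      have hr1 : 1 ≤ r := le_of_lt hr
      have hr0 : 0 < r := lt_of_lt_of_le one_pos hr1
      set s := Real.sqrt (1 + r ^ 2) with hs
      have hs1 : 1 ≤ s := one_le_sqrt_one_add r
      have hs0 : 0 ≤ s := le_trans zero_le_one hs1
      have hsr : r ≤ s := by
        have h := Real.sq_sqrt (show (0:ℝ) ≤ 1 + r ^ 2 by positivity)
        nlinarith [Real.sqrt_nonneg (1 + r ^ 2)]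
      have hs2 : s ≤ Real.sqrt 2 * r := by
        have h1 : s ≤ Real.sqrt (2 * r ^ 2) := Real.sqrt_le_sqrt (by nlinarith)
        rwa [Real.sqrt_mul (by norm_num : (0:ℝ) ≤ 2), Real.sqrt_sq hr0.le] at h1
      have hlam1 : 1 ≤ s / r := (one_le_div hr0).2 hsr
      have hlam2 : s / r ≤ b ^ k₀ :=
        le_trans ((div_le_iff₀ hr0).2 (by linarith [hs2])) hk₀
      have hαlow := hiter r hr1 (s/r) hlam1 hlam2
      rw [div_mul_cancel₀ _ hr0.ne'] at hαlow
      have hαs : 0 < α s := hpos s hs1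
      have hαr : 0 < α r := hpos r hr1
      have hinv : (α s)⁻¹ ≤ c ^ k₀ * (α r)⁻¹ := by
        have := inv_anti₀ (by positivity : (0:ℝ) < (c ^ k₀)⁻¹ * α r) hαlow
        rwa [mul_inv, inv_inv] at this
      have e1 : s ^ l ≤ Real.sqrt 2 ^ l * r ^ l := by
        calc s ^ l ≤ (Real.sqrt 2 * r) ^ l := pow_le_pow_left₀ hs0 hs2 l
          _ = _ := mul_pow _ _ _
      have h6 : (s ^ l * (α s)⁻¹) ^ 2 ≤
          (Real.sqrt 2 ^ l * r ^ l * (c ^ k₀ * (α r)⁻¹)) ^ 2 := by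
        apply pow_le_pow_left₀ (mul_nonneg (pow_nonneg hs0 _) (inv_nonneg.2 hαs.le))
        exact mul_le_mul e1 hinv (inv_nonneg.2 hαs.le) (by positivity)
      have e2 : (Real.sqrt 2 ^ l) ^ 2 = 2 ^ l := by
        rw [← pow_mul, mul_comm, pow_mul, Real.sq_sqrt (by norm_num : (0:ℝ) ≤ 2)]
      have e3 : (c ^ k₀ : ℝ) ^ 2 = c ^ (2*k₀) := by rw [← pow_mul, mul_comm]
      have hpow : r ^ (n-1) * (r ^ l) ^ 2 = r ^ (2*l+n-1) := by
        rw [← pow_mul, ← pow_add]; congr 1; omega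
      have hreal : r ^ (n-1) * ((s ^ l * (α s)⁻¹) ^ 2) ≤
          2 ^ l * c ^ (2*k₀) * (r ^ (2*l+n-1) * ((α r)⁻¹) ^ 2) := by
        calc r ^ (n-1) * ((s ^ l * (α s)⁻¹) ^ 2)
            ≤ r ^ (n-1) * ((Real.sqrt 2 ^ l * r ^ l * (c ^ k₀ * (α r)⁻¹)) ^ 2) :=
              mul_le_mul_of_nonneg_left h6 (by positivity)
          _ = (Real.sqrt 2 ^ l) ^ 2 * (c ^ k₀ : ℝ) ^ 2 *
              ((r ^ (n-1) * (r ^ l) ^ 2) * ((α r)⁻¹) ^ 2) := by ring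
          _ = 2 ^ l * c ^ (2*k₀) * (r ^ (2*l+n-1) * ((α r)⁻¹) ^ 2) := by
              rw [e2, e3, hpow]
      calc ENNReal.ofReal (r ^ (n-1)) * G r
          = ENNReal.ofReal (r ^ (n-1) * ((s ^ l * (α s)⁻¹) ^ 2)) := by
            rw [← ENNReal.ofReal_mul (by positivity)]
        _ ≤ ENNReal.ofReal (2 ^ l * c ^ (2*k₀) * (r ^ (2*l+n-1) * ((α r)⁻¹) ^ 2)) :=
            ENNReal.ofReal_le_ofReal hreal
        _ = ENNReal.ofReal (2 ^ l * c ^ (2*k₀)) *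
            ENNReal.ofReal (r ^ (2*l+n-1) * ((α r)⁻¹) ^ 2) :=
            ENNReal.ofReal_mul (by positivity)
    calc ∫⁻ r in Ioi (1:ℝ), ENNReal.ofReal (r ^ (n-1)) * G r
        ≤ ∫⁻ r in Ioi (1:ℝ), ENNReal.ofReal (2 ^ l * c ^ (2*k₀)) *
            ENNReal.ofReal (r ^ (2*l+n-1) * ((α r)⁻¹) ^ 2) := by
          apply lintegral_mono_ae
          filter_upwards [ae_restrict_mem measurableSet_Ioi] with r hr using key r hr
      _ = ENNReal.ofReal (2 ^ l * c ^ (2*k₀)) *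
            ∫⁻ r in Ioi (1:ℝ), ENNReal.ofReal (r ^ (2*l+n-1) * ((α r)⁻¹) ^ 2) :=
          lintegral_const_mul' _ _ ENNReal.ofReal_ne_top
      _ ≤ ENNReal.ofReal (2 ^ l * c ^ (2*k₀)) *
            ∫⁻ r in Ici (1:ℝ), ENNReal.ofReal (r ^ (2*l+n-1) * ((α r)⁻¹) ^ 2) := by
          gcongr
          exact Ioi_subset_Ici_self
      _ < ⊤ := ENNReal.mul_lt_top ENNReal.ofReal_lt_top hfin
  exact ENNReal.add_lt_top.2 ⟨partA, partB⟩

end Aux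

/-- Hörmander embedding theorem: if `∫₁^∞ t^{2l+n-1} α(t)⁻² dt < ∞`, then every
`w ∈ H^α(ℝⁿ)` (given on the Fourier side by `W = ŵ`, so `w = 𝓕⁻ W`) is of class `C^l`
with all derivatives of order `≤ l` bounded by `C ‖w‖_α`. -/
theorem hoermander_embedding (n l : ℕ) (hn : 1 ≤ n) (α : ℝ → ℝ) (hα : RO α)
    (hint : IntegrableOn
      (fun t : ℝ => t ^ (2 * (l : ℝ) + n - 1) * ((α t)⁻¹) ^ 2) (Set.Ici 1)) :
    ∃ C : ℝ, 0 < C ∧ ∀ W : Eucl n → ℂ, Measurable W → HnormE α W < ⊤ →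
      ContDiff ℝ (l : ℕ∞) (𝓕⁻ W) ∧
      ∀ i : ℕ, i ≤ l → ∀ x : Eucl n,
        ‖iteratedFDeriv ℝ i (𝓕⁻ W) x‖ ≤ C * (HnormE α W).toReal := by
  obtain ⟨hpos, hmα, b, hb, c, hc, hro⟩ := hα
  have hro' : ∀ t, 1 ≤ t → ∀ lam, 1 ≤ lam → lam ≤ b → c⁻¹ ≤ α (lam * t) / α t :=
    fun t ht lam h1 h2 => (hro t ht lam h1 h2).1
  set K : ℝ≥0∞ := ∫⁻ ξ : Eucl n, ENNReal.ofReal ((jap ξ ^ l * (α (jap ξ))⁻¹) ^ 2) with hKdef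
  have hKlt : K < ⊤ := K_lt_top n l hn α hpos hmα hb hc hro' hint
  have hKhalf : K ^ (1/2 : ℝ) < ⊤ := ENNReal.rpow_lt_top_of_nonneg (by norm_num) hKlt.ne
  have h2pi : (1:ℝ) ≤ 2 * π := by nlinarith [Real.pi_gt_three]
  set C : ℝ := (2 * π) ^ l * ((K ^ (1/2 : ℝ)).toReal + 1) with hCdef
  have hC0 : 0 < C := by
    apply mul_pos (pow_pos (by positivity) l)
    positivity
  refine ⟨C, hC0, ?_⟩
  intro W hW hWfin
  set H : ℝ≥0∞ := HnormE α W with hHdef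
  -- measurability
  have hjm : Measurable fun ξ : Eucl n => jap ξ := jap_continuous.measurable
  have hαjap : Measurable fun ξ : Eucl n => α (jap ξ) :=
    (alpha_meas_comp hmα).comp measurable_norm
  -- Cauchy-Schwarz
  set A : Eucl n → ℝ≥0∞ := fun ξ => ENNReal.ofReal (jap ξ ^ l * (α (jap ξ))⁻¹) with hAdef
  set B : Eucl n → ℝ≥0∞ := fun ξ => ENNReal.ofReal (α (jap ξ)) * (‖W ξ‖₊ : ℝ≥0∞) with hBdef
  have hAm : Measurable A := ((hjm.pow_const l).mul hαjap.inv).ennreal_ofReal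
  have hBm : Measurable B := hαjap.ennreal_ofReal.mul hW.nnnorm.coe_nnreal_ennreal
  have hconj : Real.HolderConjugate 2 2 :=
    (Real.holderConjugate_iff_eq_conjExponent one_lt_two).2 (by norm_num)
  have hCS := ENNReal.lintegral_mul_le_Lp_mul_Lq volume hconj hAm.aemeasurable hBm.aemeasurable
  have hA2 : ∫⁻ ξ, A ξ ^ (2:ℝ) = K := by
    apply lintegral_congr
    intro ξ
    have hnn : 0 ≤ jap ξ ^ l * (α (jap ξ))⁻¹ :=
      mul_nonneg (pow_nonneg (jap_pos ξ).le _) (inv_nonneg.2 (hpos _ (jap_one_le ξ)).le)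
    rw [hAdef, show (2:ℝ) = ((2:ℕ):ℝ) by norm_num, ENNReal.rpow_natCast,
      ← ENNReal.ofReal_pow hnn]
  have hB2 : ∫⁻ ξ, B ξ ^ (2:ℝ) = ∫⁻ ξ, ENNReal.ofReal ((α (jap ξ)) ^ 2) * (‖W ξ‖₊ : ℝ≥0∞) ^ 2 := by
    apply lintegral_congr
    intro ξ
    rw [hBdef, show (2:ℝ) = ((2:ℕ):ℝ) by norm_num, ENNReal.rpow_natCast, mul_pow,
      ← ENNReal.ofReal_pow (hpos _ (jap_one_le ξ)).le]
  have hAB : ∀ ξ, (A * B) ξ = ENNReal.ofReal (jap ξ ^ l) * (‖W ξ‖₊ : ℝ≥0∞) := by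
    intro ξ
    have hα0 : 0 < α (jap ξ) := hpos _ (jap_one_le ξ)
    have : A ξ * B ξ = (ENNReal.ofReal (jap ξ ^ l * (α (jap ξ))⁻¹) *
        ENNReal.ofReal (α (jap ξ))) * (‖W ξ‖₊ : ℝ≥0∞) := by
      rw [hAdef, hBdef]; ring
    rw [Pi.mul_apply, this, ← ENNReal.ofReal_mul
      (mul_nonneg (pow_nonneg (jap_pos ξ).le _) (inv_nonneg.2 hα0.le))]
    congr 2
    field_simp
  have hCS' : ∫⁻ ξ, ENNReal.ofReal (jap ξ ^ l) * (‖W ξ‖₊ : ℝ≥0∞) ≤ K ^ (1/2:ℝ) * H := by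
    calc ∫⁻ ξ, ENNReal.ofReal (jap ξ ^ l) * (‖W ξ‖₊ : ℝ≥0∞)
        = ∫⁻ ξ, (A * B) ξ := (lintegral_congr hAB).symm
      _ ≤ (∫⁻ ξ, A ξ ^ (2:ℝ)) ^ (1/2:ℝ) * (∫⁻ ξ, B ξ ^ (2:ℝ)) ^ (1/2:ℝ) := hCS
      _ = K ^ (1/2:ℝ) * H := by rw [hA2, hB2]; rfl
  have hRHSlt : K ^ (1/2:ℝ) * H < ⊤ := ENNReal.mul_lt_top hKhalf hWfin
  -- integrability of ‖v‖^i * ‖W v‖ and bound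
  have hptw : ∀ i : ℕ, i ≤ l → ∀ v : Eucl n,
      ENNReal.ofReal (‖v‖ ^ i * ‖W v‖) ≤ ENNReal.ofReal (jap v ^ l) * (‖W v‖₊ : ℝ≥0∞) := by
    intro i hi v
    rw [ENNReal.ofReal_mul (by positivity), ofReal_norm, enorm_eq_nnnorm]
    apply mul_le_mul_of_nonneg_right _ (by positivity)
    apply ENNReal.ofReal_le_ofReal
    calc ‖v‖ ^ i ≤ jap v ^ i := pow_le_pow_left₀ (norm_nonneg v) (norm_le_jap v) i
      _ ≤ jap v ^ l := pow_le_pow_right₀ (jap_one_le v) hi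
  have hmeas_i : ∀ i : ℕ, Measurable fun v : Eucl n => ‖v‖ ^ i * ‖W v‖ := fun i =>
    (measurable_norm.pow_const i).mul hW.norm
  have hIi : ∀ i : ℕ, i ≤ l → Integrable (fun v : Eucl n => ‖v‖ ^ i * ‖W v‖) := by
    intro i hi
    refine ⟨(hmeas_i i).aestronglyMeasurable, ?_⟩
    rw [hasFiniteIntegral_iff_norm]
    calc ∫⁻ v, ENNReal.ofReal ‖‖v‖ ^ i * ‖W v‖‖
        = ∫⁻ v, ENNReal.ofReal (‖v‖ ^ i * ‖W v‖) := by
          apply lintegral_congr; intro v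
          rw [Real.norm_of_nonneg (by positivity)]
      _ ≤ ∫⁻ v, ENNReal.ofReal (jap v ^ l) * (‖W v‖₊ : ℝ≥0∞) :=
          lintegral_mono (hptw i hi)
      _ ≤ K ^ (1/2:ℝ) * H := hCS'
      _ < ⊤ := hRHSlt
  have hIbound : ∀ i : ℕ, i ≤ l →
      ∫ v, ‖v‖ ^ i * ‖W v‖ ≤ (K ^ (1/2:ℝ)).toReal * H.toReal := by
    intro i hi
    rw [integral_eq_lintegral_of_nonneg_ae (Filter.Eventually.of_forall fun v => by positivity)
      (hmeas_i i).aestronglyMeasurable]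
    rw [← ENNReal.toReal_mul]
    apply ENNReal.toReal_mono hRHSlt.ne
    calc ∫⁻ v, ENNReal.ofReal (‖v‖ ^ i * ‖W v‖)
        ≤ ∫⁻ v, ENNReal.ofReal (jap v ^ l) * (‖W v‖₊ : ℝ≥0∞) := lintegral_mono (hptw i hi)
      _ ≤ K ^ (1/2:ℝ) * H := hCS'
  -- Fourier analysis
  have hInt : ∀ i : ℕ, (i : ℕ∞) ≤ (l : ℕ∞) → Integrable (fun v : Eucl n => ‖v‖ ^ i * ‖W v‖) :=
    fun i hi => hIi i (by exact_mod_cast hi)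
  have hcd : ContDiff ℝ (l : ℕ∞) (𝓕 W) := Real.contDiff_fourier hInt
  have hnegeq : 𝓕⁻ W = (𝓕 W) ∘ ⇑(LinearIsometryEquiv.neg ℝ (E := Eucl n)) := by
    funext x
    simpa using Real.fourierInv_eq_fourier_neg W x
  constructor
  · rw [hnegeq]
    exact hcd.comp (LinearIsometryEquiv.neg ℝ (E := Eucl n)).contDiff
  · intro i hi x
    have hiN : (i : ℕ∞) ≤ (l : ℕ∞) := by exact_mod_cast hi
    have heq := Real.iteratedFDeriv_fourier (f := W) hInt hW.aestronglyMeasurable hiN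
    have h1 : ‖iteratedFDeriv ℝ i (𝓕⁻ W) x‖ = ‖iteratedFDeriv ℝ i (𝓕 W) (-x)‖ := by
      rw [hnegeq]
      simpa using LinearIsometryEquiv.norm_iteratedFDeriv_comp_right
        (LinearIsometryEquiv.neg ℝ (E := Eucl n)) (𝓕 W) x i
    rw [h1, heq]
    have h2 : ‖𝓕 (fun v => VectorFourier.fourierPowSMulRight (innerSL ℝ) W v i) (-x)‖ ≤
        ∫ v, ‖VectorFourier.fourierPowSMulRight (innerSL ℝ) W v i‖ :=
      VectorFourier.norm_fourierIntegral_le_integral_norm _ _ _ _ _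
    have hLle : ‖innerSL ℝ (E := Eucl n)‖ ≤ 1 := norm_innerSL_le ℝ
    have h3 : ∫ v, ‖VectorFourier.fourierPowSMulRight (innerSL ℝ) W v i‖ ≤
        (2 * π) ^ i * ∫ v, ‖v‖ ^ i * ‖W v‖ := by
      rw [← integral_const_mul]
      apply integral_mono_of_nonneg (Filter.Eventually.of_forall fun v => norm_nonneg _)
        ((hIi i hi).const_mul _)
      apply Filter.Eventually.of_forall
      intro v
      calc ‖VectorFourier.fourierPowSMulRight (innerSL ℝ) W v i‖
          ≤ (2 * π * ‖innerSL ℝ (E := Eucl n)‖) ^ i * ‖v‖ ^ i * ‖W v‖ :=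
            VectorFourier.norm_fourierPowSMulRight_le _ _ _ _
        _ ≤ (2 * π) ^ i * (‖v‖ ^ i * ‖W v‖) := by
            rw [← mul_assoc]
            apply mul_le_mul_of_nonneg_right _ (norm_nonneg _)
            apply mul_le_mul_of_nonneg_right _ (by positivity)
            apply pow_le_pow_left₀ (by positivity)
            nlinarith [Real.pi_pos]
    have h4 : (2 * π) ^ i * ∫ v, ‖v‖ ^ i * ‖W v‖ ≤ C * H.toReal := by
      have hi1 : ((2:ℝ) * π) ^ i ≤ (2 * π) ^ l := pow_le_pow_right₀ h2pi hi
      have hint0 : 0 ≤ ∫ v, ‖v‖ ^ i * ‖W v‖ :=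
        integral_nonneg fun v => by positivity
      calc (2 * π) ^ i * ∫ v, ‖v‖ ^ i * ‖W v‖
          ≤ (2 * π) ^ l * ((K ^ (1/2:ℝ)).toReal * H.toReal) := by
            apply mul_le_mul hi1 (hIbound i hi) hint0 (by positivity)
        _ ≤ (2 * π) ^ l * (((K ^ (1/2:ℝ)).toReal + 1) * H.toReal) := by
            apply mul_le_mul_of_nonneg_left _ (by positivity)
            apply mul_le_mul_of_nonneg_right _ ENNReal.toReal_nonneg
            linarith
        _ = C * H.toReal := by rw [hCdef]; ring
    calc ‖𝓕 (fun v => VectorFourier.fourierPowSMulRight (innerSL ℝ) W v i) (-x)‖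
        ≤ ∫ v, ‖VectorFourier.fourierPowSMulRight (innerSL ℝ) W v i‖ := h2
      _ ≤ (2 * π) ^ i * ∫ v, ‖v‖ ^ i * ‖W v‖ := h3
      _ ≤ C * H.toReal := h4
end
end

section
/- Let α ∈ RO. The two conditions are equivalent: (i) ∫₁^∞ t^{2l+n-1} α(t)^{-2} dt < ∞; (ii) the function ξ ↦ ⟨ξ⟩^{l} / α(⟨ξ⟩) belongs to L²(ℝⁿ). Consequently, under (i), for every w ∈ H^α(ℝⁿ) and every multi-index β with |β| ≤ l, the function ξ^β ŵ(ξ) is integrable on ℝⁿ. -/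
noncomputable section
open MeasureTheory Filter Set Real

open scoped ENNReal NNReal

section Aux
open Metric

lemma ro_bounds {α : ℝ → ℝ} (hα : RO α) :
    ∃ C : ℝ, 1 ≤ C ∧ ∀ t, 1 ≤ t → ∀ lam, 1 ≤ lam → lam ≤ Real.sqrt 2 →
      C⁻¹ * α t ≤ α (lam * t) ∧ α (lam * t) ≤ C * α t := by
  obtain ⟨hpos, -, b, hb, c, hc, hbc⟩ := hα
  have hb0 : (0:ℝ) < b := lt_trans one_pos hb
  have hc0 : (0:ℝ) < c := lt_of_lt_of_le one_pos hc
  have key : ∀ k : ℕ, ∀ t, 1 ≤ t → ∀ lam, 1 ≤ lam → lam ≤ b ^ k →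
      (c ^ k)⁻¹ * α t ≤ α (lam * t) ∧ α (lam * t) ≤ c ^ k * α t := by
    intro k
    induction k with
    | zero =>
      intro t ht lam h1 h2
      simp only [pow_zero] at h2 ⊢
      have : lam = 1 := le_antisymm h2 h1
      subst this
      simp
    | succ k ih =>
      intro t ht lam h1 h2
      by_cases hcase : lam ≤ b ^ k
      · obtain ⟨hl, hu⟩ := ih t ht lam h1 hcase
        have hck : c ^ k ≤ c ^ (k+1) := pow_le_pow_right₀ hc (Nat.le_succ k)
        have hcki : (c ^ (k+1))⁻¹ ≤ (c ^ k)⁻¹ := inv_anti₀ (pow_pos hc0 k) hck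
        have hat : 0 ≤ α t := (hpos t ht).le
        constructor
        · calc (c ^ (k+1))⁻¹ * α t ≤ (c ^ k)⁻¹ * α t := by gcongr
            _ ≤ α (lam * t) := hl
        · calc α (lam * t) ≤ c ^ k * α t := hu
            _ ≤ c ^ (k+1) * α t := by gcongr
      · push_neg at hcase
        have hbk1 : (1:ℝ) ≤ b ^ k := one_le_pow₀ hb.le
        have hbkt : (1:ℝ) ≤ b ^ k * t := one_le_mul_of_one_le_of_one_le hbk1 ht
        have hmu1 : 1 ≤ lam / b ^ k := (one_le_div (lt_of_lt_of_le one_pos hbk1)).2 hcase.le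
        have hmub : lam / b ^ k ≤ b := by
          rw [div_le_iff₀ (lt_of_lt_of_le one_pos hbk1)]
          calc lam ≤ b ^ (k+1) := h2
            _ = b * b ^ k := by ring
        obtain ⟨hl1, hu1⟩ := hbc (b ^ k * t) hbkt (lam / b ^ k) hmu1 hmub
        obtain ⟨hl2, hu2⟩ := ih t ht (b ^ k) hbk1 le_rfl
        have heq : lam / b ^ k * (b ^ k * t) = lam * t := by
          field_simp
        rw [heq] at hl1 hu1
        have hαbkt : 0 < α (b ^ k * t) := hpos _ hbkt
        have hl1' : c⁻¹ * α (b ^ k * t) ≤ α (lam * t) := by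
          rw [le_div_iff₀ hαbkt] at hl1; linarith
        have hu1' : α (lam * t) ≤ c * α (b ^ k * t) := by
          rw [div_le_iff₀ hαbkt] at hu1; linarith
        have hci : (0:ℝ) ≤ c⁻¹ := (inv_pos.2 hc0).le
        constructor
        · have e1 : (c ^ (k+1))⁻¹ * α t = c⁻¹ * ((c ^ k)⁻¹ * α t) := by
            rw [pow_succ, mul_inv]; ring
          rw [e1]
          exact le_trans (by gcongr) hl1'
        · have e2 : c ^ (k+1) * α t = c * (c ^ k * α t) := by ring
          rw [e2]
          exact le_trans hu1' (by gcongr)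
  obtain ⟨k, hk⟩ := pow_unbounded_of_one_lt (Real.sqrt 2) hb
  exact ⟨c ^ k, one_le_pow₀ hc, fun t ht lam h1 h2 => key k t ht lam h1 (h2.trans hk.le)⟩

lemma lintegral_fun_norm_addHaar' {E : Type*} [NormedAddCommGroup E] [NormedSpace ℝ E]
    [Nontrivial E] [MeasurableSpace E] [BorelSpace E] [FiniteDimensional ℝ E]
    (μ : Measure E) [μ.IsAddHaarMeasure] {f : ℝ → ℝ≥0∞} (hf : Measurable f) :
    ∫⁻ x, f ‖x‖ ∂μ = μ.toSphere univ *
      ∫⁻ y in Ioi (0:ℝ), ENNReal.ofReal (y ^ (Module.finrank ℝ E - 1)) * f y := by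
  have h1 : ∫⁻ x, f ‖x‖ ∂μ = ∫⁻ x : ({(0)}ᶜ : Set E), f ‖x.1‖ ∂(μ.comap (↑)) := by
    rw [lintegral_subtype_comap (measurableSet_singleton _).compl fun x => f ‖x‖,
      restrict_compl_singleton]
  have h2 := μ.measurePreserving_homeomorphUnitSphereProd.lintegral_comp_emb
      (Homeomorph.measurableEmbedding _)
      (f ∘ Subtype.val ∘ Prod.snd : sphere (0:E) 1 × Ioi (0:ℝ) → ℝ≥0∞)
  have h2' : ∫⁻ x : ({(0)}ᶜ : Set E), f ‖x.1‖ ∂(μ.comap (↑)) =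
      ∫⁻ p : sphere (0:E) 1 × Ioi (0:ℝ), f p.2
        ∂(μ.toSphere.prod (.volumeIoiPow (Module.finrank ℝ E - 1))) := by
    refine Eq.trans (lintegral_congr fun x => ?_) h2
    simp [homeomorphUnitSphereProd]
  rw [h1, h2']
  have hfm : Measurable (f ∘ Subtype.val ∘ Prod.snd : sphere (0:E) 1 × Ioi (0:ℝ) → ℝ≥0∞) :=
    hf.comp (measurable_subtype_coe.comp measurable_snd)
  rw [show (∫⁻ p : sphere (0:E) 1 × Ioi (0:ℝ), f p.2
        ∂(μ.toSphere.prod (.volumeIoiPow (Module.finrank ℝ E - 1)))) =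
      ∫⁻ p : sphere (0:E) 1 × Ioi (0:ℝ), (f ∘ Subtype.val ∘ Prod.snd) p
        ∂(μ.toSphere.prod (.volumeIoiPow (Module.finrank ℝ E - 1))) from rfl,
    lintegral_prod _ hfm.aemeasurable]
  simp only [Function.comp]
  rw [lintegral_const, Measure.volumeIoiPow]
  rw [show (∫⁻ y : Ioi (0:ℝ), f ↑y
        ∂((Measure.comap Subtype.val volume).withDensity
          fun r : Ioi (0:ℝ) => ENNReal.ofReal (r.1 ^ (Module.finrank ℝ E - 1)))) =
      ∫⁻ y : Ioi (0:ℝ), (f ∘ Subtype.val) y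
        ∂((Measure.comap Subtype.val volume).withDensity
          fun r : Ioi (0:ℝ) => ENNReal.ofReal (r.1 ^ (Module.finrank ℝ E - 1))) from rfl]
  rw [lintegral_withDensity_eq_lintegral_mul _
    ((measurable_subtype_coe.pow_const _).ennreal_ofReal) (hf.comp measurable_subtype_coe)]
  simp only [Pi.mul_apply, Function.comp_apply]
  rw [lintegral_subtype_comap measurableSet_Ioi
    (fun y => ENNReal.ofReal (y ^ (Module.finrank ℝ E - 1)) * f y)]
  rw [mul_comm]

lemma memL2_iff_lintegral {X : Type*} [MeasurableSpace X] {μ : Measure X} {f : X → ℝ}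
    (hf : Measurable f) (h0 : ∀ x, 0 ≤ f x) :
    MemLp f 2 μ ↔ ∫⁻ x, ENNReal.ofReal (f x ^ 2) ∂μ < ∞ := by
  rw [memLp_two_iff_integrable_sq hf.aestronglyMeasurable,
    ← lintegral_ofReal_ne_top_iff_integrable ((hf.pow_const 2).aestronglyMeasurable)
      (Eventually.of_forall fun x => pow_nonneg (h0 x) 2), lt_top_iff_ne_top]

lemma real_up (n l : ℕ) (hn : 1 ≤ n) {r s ar as C : ℝ} (hr1 : 1 ≤ r) (hrs : r ≤ s)
    (hs2 : s ^ 2 ≤ 2 * r ^ 2) (har : 0 < ar) (has : 0 < as) (hC : 0 < C)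
    (hlo : C⁻¹ * ar ≤ as) :
    r ^ (n-1) * (s ^ l / as) ^ 2 ≤ (2 ^ l * C ^ 2) * (r ^ (2*l+n-1) * (ar⁻¹) ^ 2) := by
  have hr0 : (0:ℝ) < r := lt_of_lt_of_le one_pos hr1
  have hs0 : (0:ℝ) ≤ s := le_trans hr0.le hrs
  have h1 : (s ^ l) ^ 2 ≤ 2 ^ l * (r ^ l) ^ 2 := by
    calc (s ^ l) ^ 2 = (s ^ 2) ^ l := by rw [← pow_mul, ← pow_mul, mul_comm]
      _ ≤ (2 * r ^ 2) ^ l := pow_le_pow_left₀ (sq_nonneg s) hs2 l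
      _ = 2 ^ l * (r ^ l) ^ 2 := by rw [mul_pow, ← pow_mul, ← pow_mul, mul_comm l 2]
  have h2 : as⁻¹ ≤ C * ar⁻¹ := by
    have hpos : (0:ℝ) < C⁻¹ * ar := by positivity
    calc as⁻¹ ≤ (C⁻¹ * ar)⁻¹ := inv_anti₀ hpos hlo
      _ = C * ar⁻¹ := by rw [mul_inv, inv_inv]
  have h3 : (as⁻¹) ^ 2 ≤ C ^ 2 * (ar⁻¹) ^ 2 := by
    calc (as⁻¹) ^ 2 ≤ (C * ar⁻¹) ^ 2 := pow_le_pow_left₀ (inv_nonneg.2 has.le) h2 2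
      _ = C ^ 2 * (ar⁻¹) ^ 2 := mul_pow _ _ _
  have e0 : (s ^ l / as) ^ 2 = (s ^ l) ^ 2 * (as⁻¹) ^ 2 := by
    rw [div_pow, div_eq_mul_inv, inv_pow]
  have e1 : r ^ (2*l+n-1) = r ^ (n-1) * (r ^ l) ^ 2 := by
    rw [← pow_mul, ← pow_add]
    congr 1
    omega
  calc r ^ (n-1) * (s ^ l / as) ^ 2 = r ^ (n-1) * ((s ^ l) ^ 2 * (as⁻¹) ^ 2) := by rw [e0]
    _ ≤ r ^ (n-1) * ((2 ^ l * (r ^ l) ^ 2) * (C ^ 2 * (ar⁻¹) ^ 2)) := by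
        exact mul_le_mul_of_nonneg_left
          (mul_le_mul h1 h3 (by positivity) (by positivity)) (by positivity)
    _ = (2 ^ l * C ^ 2) * (r ^ (2*l+n-1) * (ar⁻¹) ^ 2) := by rw [e1]; ring

lemma real_down (n l : ℕ) (hn : 1 ≤ n) {r s ar as C : ℝ} (hr1 : 1 ≤ r) (hrs : r ≤ s)
    (har : 0 < ar) (has : 0 < as) (hC : 0 < C)
    (hhi : as ≤ C * ar) :
    r ^ (2*l+n-1) * (ar⁻¹) ^ 2 ≤ C ^ 2 * (r ^ (n-1) * (s ^ l / as) ^ 2) := by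
  have hr0 : (0:ℝ) < r := lt_of_lt_of_le one_pos hr1
  have h1 : (r ^ l) ^ 2 ≤ (s ^ l) ^ 2 :=
    pow_le_pow_left₀ (by positivity) (pow_le_pow_left₀ hr0.le hrs l) 2
  have h2 : ar⁻¹ ≤ C * as⁻¹ := by
    have hlo : C⁻¹ * as ≤ ar := by
      rw [← inv_mul_le_iff₀ hC] at hhi
      exact hhi
    have hpos : (0:ℝ) < C⁻¹ * as := by positivity
    calc ar⁻¹ ≤ (C⁻¹ * as)⁻¹ := inv_anti₀ hpos hlo
      _ = C * as⁻¹ := by rw [mul_inv, inv_inv]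
  have h3 : (ar⁻¹) ^ 2 ≤ C ^ 2 * (as⁻¹) ^ 2 := by
    calc (ar⁻¹) ^ 2 ≤ (C * as⁻¹) ^ 2 := pow_le_pow_left₀ (inv_nonneg.2 har.le) h2 2
      _ = C ^ 2 * (as⁻¹) ^ 2 := mul_pow _ _ _
  have e0 : (s ^ l / as) ^ 2 = (s ^ l) ^ 2 * (as⁻¹) ^ 2 := by
    rw [div_pow, div_eq_mul_inv, inv_pow]
  have e1 : r ^ (2*l+n-1) = r ^ (n-1) * (r ^ l) ^ 2 := by
    rw [← pow_mul, ← pow_add]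
    congr 1
    omega
  calc r ^ (2*l+n-1) * (ar⁻¹) ^ 2 = r ^ (n-1) * ((r ^ l) ^ 2 * (ar⁻¹) ^ 2) := by
        rw [e1]; ring
    _ ≤ r ^ (n-1) * ((s ^ l) ^ 2 * (C ^ 2 * (as⁻¹) ^ 2)) := by
        exact mul_le_mul_of_nonneg_left
          (mul_le_mul h1 h3 (by positivity) (by positivity)) (by positivity)
    _ = C ^ 2 * (r ^ (n-1) * (s ^ l / as) ^ 2) := by rw [e0]; ring

end Aux

/-- Equivalence of the Hörmander condition `∫₁^∞ t^{2l+n-1} α(t)⁻² dt < ∞` with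
`⟨ξ⟩^l / α(⟨ξ⟩) ∈ L²(ℝⁿ)`; consequently, under this condition, `ξ^β ŵ(ξ)` is
integrable for every `w ∈ H^α(ℝⁿ)` and every multi-index `|β| ≤ l`. -/
theorem hoermander_condition_equiv (n l : ℕ) (hn : 1 ≤ n) (α : ℝ → ℝ) (hα : RO α) :
    (IntegrableOn
        (fun t : ℝ => t ^ (2 * (l : ℝ) + n - 1) * ((α t)⁻¹) ^ 2) (Set.Ici 1) ↔
      MemLp (fun ξ : Eucl n => (jap ξ) ^ (l : ℝ) / α (jap ξ)) 2 volume) ∧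
    (IntegrableOn
        (fun t : ℝ => t ^ (2 * (l : ℝ) + n - 1) * ((α t)⁻¹) ^ 2) (Set.Ici 1) →
      ∀ W : Eucl n → ℂ, Measurable W → HnormE α W < ⊤ →
        ∀ β : Fin n → ℕ, (∑ i, β i) ≤ l →
          Integrable (fun ξ : Eucl n => (∏ i, (ξ i : ℂ) ^ (β i)) * W ξ)) := by
  classical
  obtain ⟨C, hC1, hCb⟩ := ro_bounds hα
  have hpos := hα.1
  have hC0 : (0:ℝ) < C := lt_of_lt_of_le one_pos hC1
  -- measurable extension of α
  set A : ℝ → ℝ := fun t => if h : t ∈ Ici (1:ℝ) then α t else 1 with hA_def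
  have hAmeas : Measurable A :=
    Measurable.dite hα.2.1 (measurable_const : Measurable fun _ : ((Ici (1:ℝ))ᶜ : Set ℝ) => (1:ℝ))
      measurableSet_Ici
  have hAeq : ∀ t : ℝ, 1 ≤ t → A t = α t := fun t ht => dif_pos ht
  have hApos : ∀ t : ℝ, 1 ≤ t → 0 < A t := fun t ht => (hAeq t ht) ▸ hpos t ht
  -- basic facts about the Japanese bracket
  have hjap1 : ∀ r : ℝ, 1 ≤ Real.sqrt (1 + r ^ 2) := by
    intro r
    have h := Real.sqrt_le_sqrt (show (1:ℝ) ≤ 1 + r ^ 2 by nlinarith [sq_nonneg r])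
    rwa [Real.sqrt_one] at h
  have hNcast : ((2*l+n-1 : ℕ) : ℝ) = 2 * (l:ℝ) + n - 1 := by
    rw [Nat.cast_sub (by omega)]
    push_cast
    ring
  -- the real integrand (measurable version)
  set q : ℝ → ℝ := fun t => |t| ^ (2*l+n-1) * ((A t)⁻¹) ^ 2 with hq_def
  have hqmeas : Measurable q :=
    ((continuous_abs.measurable).pow_const _).mul ((hAmeas.inv).pow_const 2)
  have hq0 : ∀ t, 0 ≤ q t := fun t => by positivity
  have hqeq : ∀ t : ℝ, 1 ≤ t → q t = t ^ (2*l+n-1) * ((α t)⁻¹) ^ 2 := by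
    intro t ht
    simp only [hq_def]
    rw [abs_of_nonneg (le_trans zero_le_one ht), hAeq t ht]
  -- step 1 : (i) iff lintegral of q over (1,∞) finite
  have step1 : IntegrableOn (fun t : ℝ => t ^ (2 * (l : ℝ) + n - 1) * ((α t)⁻¹) ^ 2) (Ici 1)
      ↔ ∫⁻ t in Ioi (1:ℝ), ENNReal.ofReal (q t) ≠ ∞ := by
    have e1 : EqOn (fun t : ℝ => t ^ (2 * (l:ℝ) + n - 1) * ((α t)⁻¹) ^ 2) q (Ici 1) := by
      intro t ht
      simp only
      rw [hqeq t ht, ← hNcast, Real.rpow_natCast]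
    rw [integrableOn_congr_fun e1 measurableSet_Ici]
    unfold IntegrableOn
    rw [← lintegral_ofReal_ne_top_iff_integrable hqmeas.aestronglyMeasurable
      (Eventually.of_forall hq0)]
    rw [show volume.restrict (Ici (1:ℝ)) = volume.restrict (Ioi 1) from
      (Measure.restrict_congr_set Ioi_ae_eq_Ici).symm]
  -- step 2 : (ii) iff radial lintegral finite
  have hsqcont : Continuous fun r : ℝ => Real.sqrt (1 + r ^ 2) :=
    Real.continuous_sqrt.comp (continuous_const.add (continuous_pow 2))
  set g2 : ℝ → ℝ := fun r => Real.sqrt (1 + r ^ 2) ^ l / A (Real.sqrt (1 + r ^ 2)) with hg2_def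
  have hg2meas : Measurable g2 :=
    (hsqcont.measurable.pow_const l).div (hAmeas.comp hsqcont.measurable)
  have hg20 : ∀ r, 0 ≤ g2 r := fun r =>
    div_nonneg (pow_nonneg (Real.sqrt_nonneg _) l) (hApos _ (hjap1 r)).le
  have hfun : (fun ξ : Eucl n => (jap ξ) ^ (l:ℝ) / α (jap ξ)) = fun ξ : Eucl n => g2 ‖ξ‖ := by
    funext ξ
    simp only [hg2_def, jap]
    rw [Real.rpow_natCast, hAeq _ (hjap1 ‖ξ‖)]
  set G : ℝ → ℝ≥0∞ := fun r => ENNReal.ofReal (g2 r ^ 2) with hG_def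
  have hGmeas : Measurable G := (hg2meas.pow_const 2).ennreal_ofReal
  haveI : Nontrivial (Eucl n) := by
    refine ⟨0, EuclideanSpace.single ⟨0, hn⟩ 1, fun h => ?_⟩
    have := congrArg norm h
    rw [norm_zero, EuclideanSpace.norm_single] at this
    norm_num at this
  have hpolar := lintegral_fun_norm_addHaar' (volume : Measure (Eucl n)) hGmeas
  rw [finrank_euclideanSpace_fin] at hpolar
  set S : ℝ≥0∞ := (volume : Measure (Eucl n)).toSphere univ with hS_def
  have hS_ne_top : S ≠ ∞ := measure_ne_top _ _
  have hS_ne0 : S ≠ 0 := by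
    rw [hS_def, Measure.toSphere_apply_univ]
    rw [finrank_euclideanSpace_fin]
    refine mul_ne_zero ?_ (Metric.measure_ball_pos _ _ one_pos).ne'
    exact Nat.cast_ne_zero.mpr (by omega)
  set R : ℝ≥0∞ := ∫⁻ r in Ioi (0:ℝ), ENNReal.ofReal (r ^ (n-1)) * G r with hR_def
  have step2 : MemLp (fun ξ : Eucl n => (jap ξ) ^ (l:ℝ) / α (jap ξ)) 2 volume ↔ R < ∞ := by
    rw [hfun, memL2_iff_lintegral
      (show Measurable fun ξ : Eucl n => g2 ‖ξ‖ from hg2meas.comp measurable_norm)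
      (fun ξ => hg20 _)]
    have : (∫⁻ ξ : Eucl n, ENNReal.ofReal (g2 ‖ξ‖ ^ 2)) = ∫⁻ ξ : Eucl n, G ‖ξ‖ := rfl
    rw [this, hpolar]
    constructor
    · intro h
      rcases ENNReal.mul_lt_top_iff.1 h with ⟨-, h2⟩ | h0 | h0
      · exact h2
      · exact absurd h0 hS_ne0
      · rw [h0]; exact ENNReal.zero_lt_top
    · intro h
      exact ENNReal.mul_lt_top hS_ne_top.lt_top h
  -- step 3 : split the radial integral
  have hsplit : R = (∫⁻ r in Ioc (0:ℝ) 1, ENNReal.ofReal (r ^ (n-1)) * G r)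
      + ∫⁻ r in Ioi (1:ℝ), ENNReal.ofReal (r ^ (n-1)) * G r := by
    rw [hR_def, ← Ioc_union_Ioi_eq_Ioi (zero_le_one : (0:ℝ) ≤ 1),
      lintegral_union measurableSet_Ioi (Ioc_disjoint_Ioi le_rfl)]
  -- the part near the origin is always finite
  have hR1 : (∫⁻ r in Ioc (0:ℝ) 1, ENNReal.ofReal (r ^ (n-1)) * G r) < ∞ := by
    set K1 : ℝ := Real.sqrt 2 ^ l / (C⁻¹ * α 1) with hK1_def
    have hb : ∀ r ∈ Ioc (0:ℝ) 1, ENNReal.ofReal (r ^ (n-1)) * G r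
        ≤ ENNReal.ofReal (K1 ^ 2) := by
      intro r hr
      obtain ⟨hr0, hr1⟩ := hr
      have hs1 : 1 ≤ Real.sqrt (1 + r ^ 2) := hjap1 r
      have hs2 : Real.sqrt (1 + r ^ 2) ≤ Real.sqrt 2 :=
        Real.sqrt_le_sqrt (by nlinarith)
      have hαs := hCb 1 le_rfl (Real.sqrt (1 + r ^ 2)) hs1 hs2
      rw [mul_one] at hαs
      have hden : 0 < C⁻¹ * α 1 := by
        have := hpos 1 le_rfl
        positivity
      have hg2le : g2 r ≤ K1 := by
        rw [hg2_def, hK1_def]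
        simp only
        rw [hAeq _ hs1]
        exact div_le_div₀ (by positivity) (pow_le_pow_left₀ (Real.sqrt_nonneg _) hs2 l)
          hden hαs.1
      have h1 : ENNReal.ofReal (r ^ (n-1)) ≤ 1 := by
        rw [show (1:ℝ≥0∞) = ENNReal.ofReal 1 from ENNReal.ofReal_one.symm]
        exact ENNReal.ofReal_le_ofReal (pow_le_one₀ hr0.le hr1)
      have h2 : G r ≤ ENNReal.ofReal (K1 ^ 2) := by
        rw [hG_def]
        exact ENNReal.ofReal_le_ofReal (pow_le_pow_left₀ (hg20 r) hg2le 2)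
      calc ENNReal.ofReal (r ^ (n-1)) * G r ≤ 1 * ENNReal.ofReal (K1 ^ 2) :=
            mul_le_mul' h1 h2
        _ = ENNReal.ofReal (K1 ^ 2) := one_mul _
    calc (∫⁻ r in Ioc (0:ℝ) 1, ENNReal.ofReal (r ^ (n-1)) * G r)
        ≤ ∫⁻ _ in Ioc (0:ℝ) 1, ENNReal.ofReal (K1 ^ 2) :=
          setLIntegral_mono' measurableSet_Ioc hb
      _ = ENNReal.ofReal (K1 ^ 2) * volume (Ioc (0:ℝ) 1) := setLIntegral_const _ _
      _ < ∞ := ENNReal.mul_lt_top ENNReal.ofReal_lt_top (by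
          rw [Real.volume_Ioc]; exact ENNReal.ofReal_lt_top)
  -- step 4 : two-sided comparison on (1,∞)
  have hcomp : ∀ r ∈ Ioi (1:ℝ),
      (ENNReal.ofReal (r ^ (n-1)) * G r ≤ ENNReal.ofReal ((2:ℝ) ^ l * C ^ 2) *
          ENNReal.ofReal (q r)) ∧
      (ENNReal.ofReal (q r) ≤ ENNReal.ofReal (C ^ 2) *
          (ENNReal.ofReal (r ^ (n-1)) * G r)) := by
    intro r hr
    have hr1 : (1:ℝ) ≤ r := (le_of_lt hr)
    have hr0 : (0:ℝ) < r := lt_of_lt_of_le one_pos hr1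
    set s : ℝ := Real.sqrt (1 + r ^ 2) with hs_def
    have hs1 : 1 ≤ s := hjap1 r
    have hrs : r ≤ s := by
      have h := Real.sqrt_le_sqrt (show r ^ 2 ≤ 1 + r ^ 2 by nlinarith)
      rwa [Real.sqrt_sq hr0.le] at h
    have hsq : s ^ 2 ≤ 2 * r ^ 2 := by
      rw [hs_def, Real.sq_sqrt (by positivity)]
      nlinarith
    have hlam1 : 1 ≤ s / r := (one_le_div hr0).2 hrs
    have hlam2 : s / r ≤ Real.sqrt 2 := by
      rw [div_le_iff₀ hr0]
      have h1 : s ≤ Real.sqrt (2 * r ^ 2) := by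
        rw [hs_def]
        exact Real.sqrt_le_sqrt (by nlinarith)
      calc s ≤ Real.sqrt (2 * r ^ 2) := h1
        _ = Real.sqrt 2 * r := by
            rw [Real.sqrt_mul (by norm_num) (r ^ 2), Real.sqrt_sq hr0.le]
    obtain ⟨hlo, hhi⟩ := hCb r hr1 (s / r) hlam1 hlam2
    rw [div_mul_cancel₀ _ hr0.ne'] at hlo hhi
    have hαr : 0 < α r := hpos r hr1
    have hαs : 0 < α s := hpos s hs1
    have hq_r : q r = r ^ (2*l+n-1) * ((α r)⁻¹) ^ 2 := hqeq r hr1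
    have hG_r : G r = ENNReal.ofReal ((s ^ l / α s) ^ 2) := by
      rw [hG_def, hg2_def]
      simp only
      rw [hAeq _ hs1]
    constructor
    · rw [hG_r, hq_r, ← ENNReal.ofReal_mul (by positivity),
        ← ENNReal.ofReal_mul (by positivity)]
      exact ENNReal.ofReal_le_ofReal
        (real_up n l hn hr1 hrs hsq hαr hαs hC0 hlo)
    · rw [hG_r, hq_r, ← ENNReal.ofReal_mul (by positivity),
        ← ENNReal.ofReal_mul (by positivity)]
      exact ENNReal.ofReal_le_ofReal
        (real_down n l hn hr1 hrs hαr hαs hC0 hhi)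
  have hR2_le : (∫⁻ r in Ioi (1:ℝ), ENNReal.ofReal (r ^ (n-1)) * G r)
      ≤ ENNReal.ofReal ((2:ℝ) ^ l * C ^ 2) * ∫⁻ t in Ioi (1:ℝ), ENNReal.ofReal (q t) := by
    calc (∫⁻ r in Ioi (1:ℝ), ENNReal.ofReal (r ^ (n-1)) * G r)
        ≤ ∫⁻ r in Ioi (1:ℝ), ENNReal.ofReal ((2:ℝ) ^ l * C ^ 2) * ENNReal.ofReal (q r) :=
          setLIntegral_mono' measurableSet_Ioi (fun r hr => (hcomp r hr).1)
      _ = ENNReal.ofReal ((2:ℝ) ^ l * C ^ 2) * ∫⁻ t in Ioi (1:ℝ), ENNReal.ofReal (q t) :=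
          lintegral_const_mul' _ _ ENNReal.ofReal_ne_top
  have hQA_le : (∫⁻ t in Ioi (1:ℝ), ENNReal.ofReal (q t))
      ≤ ENNReal.ofReal (C ^ 2) *
        ∫⁻ r in Ioi (1:ℝ), ENNReal.ofReal (r ^ (n-1)) * G r := by
    calc (∫⁻ t in Ioi (1:ℝ), ENNReal.ofReal (q t))
        ≤ ∫⁻ r in Ioi (1:ℝ), ENNReal.ofReal (C ^ 2) *
            (ENNReal.ofReal (r ^ (n-1)) * G r) :=
          setLIntegral_mono' measurableSet_Ioi (fun r hr => (hcomp r hr).2)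
      _ = ENNReal.ofReal (C ^ 2) * ∫⁻ r in Ioi (1:ℝ), ENNReal.ofReal (r ^ (n-1)) * G r :=
          lintegral_const_mul' _ _ ENNReal.ofReal_ne_top
  -- the main equivalence
  have main : IntegrableOn (fun t : ℝ => t ^ (2 * (l : ℝ) + n - 1) * ((α t)⁻¹) ^ 2) (Ici 1)
      ↔ MemLp (fun ξ : Eucl n => (jap ξ) ^ (l : ℝ) / α (jap ξ)) 2 volume := by
    rw [step1, step2]
    constructor
    · intro h
      rw [hsplit]
      refine ENNReal.add_lt_top.2 ⟨hR1, ?_⟩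
      exact lt_of_le_of_lt hR2_le
        (ENNReal.mul_lt_top ENNReal.ofReal_lt_top (lt_top_iff_ne_top.2 h))
    · intro h
      have hR2 : (∫⁻ r in Ioi (1:ℝ), ENNReal.ofReal (r ^ (n-1)) * G r) < ∞ := by
        refine lt_of_le_of_lt ?_ h
        rw [hsplit]
        exact le_add_self
      exact (lt_of_le_of_lt hQA_le
        (ENNReal.mul_lt_top ENNReal.ofReal_lt_top hR2)).ne
  refine ⟨main, ?_⟩
  -- Part 2 : consequence
  intro hi W hWmeas hWnorm β hβ
  have hM : MemLp (fun ξ : Eucl n => (jap ξ) ^ (l : ℝ) / α (jap ξ)) 2 volume := main.1 hi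
  -- the weighted function is in L²
  set g : Eucl n → ℝ := fun ξ => A (jap ξ) * ‖W ξ‖ with hg_def
  have hjapge : ∀ ξ : Eucl n, (1:ℝ) ≤ jap ξ := fun ξ => hjap1 ‖ξ‖
  have hjapmeas : Measurable fun ξ : Eucl n => jap ξ := by
    have : Continuous fun ξ : Eucl n => jap ξ :=
      hsqcont.comp continuous_norm
    exact this.measurable
  have hgmeas : Measurable g := (hAmeas.comp hjapmeas).mul hWmeas.norm
  have hg0 : ∀ ξ, 0 ≤ g ξ := fun ξ =>
    mul_nonneg (hApos _ (hjap1 ‖ξ‖)).le (norm_nonneg _)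
  have hHfin : ∫⁻ ξ : Eucl n, ENNReal.ofReal ((α (jap ξ)) ^ 2) * (‖W ξ‖₊ : ℝ≥0∞) ^ 2 < ∞ := by
    unfold HnormE at hWnorm
    rwa [ENNReal.rpow_lt_top_iff_of_pos (by norm_num : (0:ℝ) < 1/2)] at hWnorm
  have hg2 : MemLp g 2 volume := by
    rw [memL2_iff_lintegral hgmeas hg0]
    have heq : ∀ ξ : Eucl n, ENNReal.ofReal (g ξ ^ 2)
        = ENNReal.ofReal ((α (jap ξ)) ^ 2) * (‖W ξ‖₊ : ℝ≥0∞) ^ 2 := by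
      intro ξ
      rw [hg_def]
      simp only
      rw [hAeq _ (hjapge ξ), mul_pow, ENNReal.ofReal_mul (by positivity)]
      congr 1
      rw [ENNReal.ofReal_pow (norm_nonneg _), ofReal_norm, enorm_eq_nnnorm]
    rw [lintegral_congr heq]
    exact hHfin
  -- the product is integrable
  have hMg : Integrable ((fun ξ : Eucl n => (jap ξ) ^ (l : ℝ) / α (jap ξ)) • g) volume :=
    memLp_one_iff_integrable.1 (hg2.smul hM (hpqr := ⟨by norm_num [ENNReal.inv_two_add_inv_two]⟩))
  have htarget_meas : AEStronglyMeasurable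
      (fun ξ : Eucl n => (∏ i, (ξ i : ℂ) ^ (β i)) * W ξ) volume := by
    have hcoordm : ∀ i : Fin n, Measurable fun ξ : Eucl n => ξ i := by
      intro i
      exact (EuclideanSpace.proj (𝕜 := ℝ) i).continuous.measurable
    have : Measurable fun ξ : Eucl n => ∏ i, (ξ i : ℂ) ^ (β i) :=
      Finset.measurable_prod _ fun i _ =>
        (Complex.measurable_ofReal.comp (hcoordm i)).pow_const (β i)
    exact (this.mul hWmeas).aestronglyMeasurable
  refine Integrable.mono' hMg htarget_meas (Eventually.of_forall fun ξ => ?_)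
  -- pointwise bound
  have hjξ : 1 ≤ jap ξ := hjapge ξ
  have hαj : 0 < α (jap ξ) := hpos _ hjξ
  have hcoord : ∀ i : Fin n, |ξ i| ≤ jap ξ := by
    intro i
    have h1 : ‖ξ i‖ ^ 2 ≤ ‖ξ‖ ^ 2 := by
      rw [EuclideanSpace.norm_eq, Real.sq_sqrt (Finset.sum_nonneg fun j _ => sq_nonneg _)]
      exact Finset.single_le_sum (f := fun j => ‖ξ j‖ ^ 2) (fun j _ => sq_nonneg _) (Finset.mem_univ i)
    rw [Real.norm_eq_abs] at h1
    calc |ξ i| = Real.sqrt (|ξ i| ^ 2) := (Real.sqrt_sq (abs_nonneg _)).symm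
      _ ≤ Real.sqrt (1 + ‖ξ‖ ^ 2) := Real.sqrt_le_sqrt (by nlinarith)
      _ = jap ξ := rfl
  have hb : ‖(∏ i, (ξ i : ℂ) ^ (β i)) * W ξ‖ ≤ (jap ξ) ^ l * ‖W ξ‖ := by
    rw [norm_mul]
    have h1 : ‖∏ i, (ξ i : ℂ) ^ (β i)‖ = ∏ i, |ξ i| ^ (β i) := by
      rw [norm_prod]
      congr 1
      funext i
      rw [norm_pow, Complex.norm_real, Real.norm_eq_abs]
    rw [h1]
    have h2 : (∏ i, |ξ i| ^ (β i)) ≤ (jap ξ) ^ l := by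
      calc (∏ i, |ξ i| ^ (β i)) ≤ ∏ i, (jap ξ) ^ (β i) :=
            Finset.prod_le_prod (fun i _ => by positivity)
              (fun i _ => pow_le_pow_left₀ (abs_nonneg _) (hcoord i) _)
        _ = (jap ξ) ^ (∑ i, β i) := Finset.prod_pow_eq_pow_sum _ _ _
        _ ≤ (jap ξ) ^ l := pow_le_pow_right₀ hjξ hβ
    exact mul_le_mul_of_nonneg_right h2 (norm_nonneg _)
  have heqMg : ((fun ξ : Eucl n => (jap ξ) ^ (l : ℝ) / α (jap ξ)) • g) ξ
      = (jap ξ) ^ l * ‖W ξ‖ := by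
    simp only [Pi.smul_apply', smul_eq_mul, hg_def]
    rw [hAeq _ hjξ, Real.rpow_natCast]
    field_simp
  rw [heqMg]
  exact hb
end
end

section
/- Let α ∈ RO and suppose ∫₁^∞ t^{n-1} α(t)^{-2} dt < ∞. Then every element of H^α(ℝⁿ) has Fourier transform in L¹(ℝⁿ) and hence is (equal a.e. to) a bounded continuous function, with ‖w‖_∞ ≤ C‖w‖_α for some constant C independent of w. -/
noncomputable section
open MeasureTheory Filter Set Real

open scoped ENNReal NNReal

open scoped FourierTransform

/-! ### Auxiliary lemmas -/

/-- Iterated RO lower ratio bound: for every bounded range of dilation factors,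
`α (l*t)` is bounded below by a constant times `α t`. -/
lemma ro_lower_ratio {α : ℝ → ℝ} (hα : RO α) (L : ℝ) :
    ∃ C : ℝ, 0 < C ∧ ∀ t, 1 ≤ t → ∀ l, 1 ≤ l → l ≤ L → C * α t ≤ α (l * t) := by
  obtain ⟨hpos, -, b, hb, c, hc, h⟩ := hα
  have hc0 : (0:ℝ) < c := lt_of_lt_of_le one_pos hc
  obtain ⟨k, hk⟩ := pow_unbounded_of_one_lt L hb
  have key : ∀ k : ℕ, ∀ t, 1 ≤ t → ∀ l, 1 ≤ l → l ≤ b ^ k →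
      (c ^ k)⁻¹ * α t ≤ α (l * t) := by
    intro k
    induction k with
    | zero =>
      intro t ht l hl hl'
      simp only [pow_zero] at hl' ⊢
      have : l = 1 := le_antisymm hl' hl
      subst this
      simp
    | succ k ih =>
      intro t ht l hl hl'
      by_cases hcase : l ≤ b ^ k
      · refine le_trans ?_ (ih t ht l hl hcase)
        have h1 : c ^ k ≤ c ^ (k+1) := pow_le_pow_right₀ hc (by omega)
        have h2 : (c ^ (k+1))⁻¹ ≤ (c ^ k)⁻¹ := by
          apply inv_anti₀ (pow_pos hc0 k) h1
        exact mul_le_mul_of_nonneg_right h2 (hpos t ht).le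
      · push_neg at hcase
        have hb0 : (0:ℝ) < b := lt_trans one_pos hb
        have hbk1 : (1:ℝ) ≤ b ^ k := one_le_pow₀ hb.le
        have hs : 1 ≤ b ^ k * t := one_le_mul_of_one_le_of_one_le hbk1 ht
        have h1 : (c ^ k)⁻¹ * α t ≤ α (b ^ k * t) := ih t ht (b ^ k) hbk1 le_rfl
        have hl1 : 1 ≤ l / b ^ k := (one_le_div (by positivity)).2 hcase.le
        have hl2 : l / b ^ k ≤ b := by
          rw [div_le_iff₀ (by positivity)]
          calc l ≤ b ^ (k+1) := hl'
          _ = b * b ^ k := by ring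
        have h2 := (h (b ^ k * t) hs (l / b ^ k) hl1 hl2).1
        have hαs : 0 < α (b ^ k * t) := hpos _ hs
        have h2' : c⁻¹ * α (b ^ k * t) ≤ α (l / b ^ k * (b ^ k * t)) := by
          rw [le_div_iff₀ hαs] at h2
          linarith [h2]
        have heq : l / b ^ k * (b ^ k * t) = l * t := by
          field_simp
        rw [heq] at h2'
        calc (c ^ (k+1))⁻¹ * α t = c⁻¹ * ((c ^ k)⁻¹ * α t) := by
              rw [pow_succ, mul_inv]
              ring
          _ ≤ c⁻¹ * α (b ^ k * t) := by
              apply mul_le_mul_of_nonneg_left h1 (by positivity)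
          _ ≤ α (l * t) := h2'
  refine ⟨(c ^ k)⁻¹, by positivity, fun t ht l hl hl' => ?_⟩
  exact key k t ht l hl (le_trans hl' hk.le)

/-- Polar-coordinates style formula for a lower integral of a function of the norm
on Euclidean space. -/
lemma lintegral_norm_eucl {n : ℕ} (hn : 1 ≤ n) (g : ℝ → ℝ≥0∞) (hg : Measurable g) :
    ∫⁻ x : Eucl n, g ‖x‖ =
      (volume : Measure (Eucl n)).toSphere univ *
        ∫⁻ r in Ioi (0:ℝ), ENNReal.ofReal (r ^ (n - 1)) * g r := by
  haveI : Nonempty (Fin n) := Fin.pos_iff_nonempty.mp hn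
  have hdim : Module.finrank ℝ (Eucl n) = n := finrank_euclideanSpace_fin
  have hmeas : Measurable fun p : Metric.sphere (0 : Eucl n) 1 × Ioi (0:ℝ) => g p.2 :=
    hg.comp (measurable_subtype_coe.comp measurable_snd)
  calc ∫⁻ x : Eucl n, g ‖x‖
      = ∫⁻ x in ({0}ᶜ : Set (Eucl n)), g ‖x‖ := by
        rw [restrict_compl_singleton]
    _ = ∫⁻ x : ({(0:Eucl n)}ᶜ : Set (Eucl n)), g ‖x.1‖
          ∂((volume : Measure (Eucl n)).comap (↑)) :=
        (lintegral_subtype_comap (measurableSet_singleton _).compl _).symm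
    _ = ∫⁻ p : Metric.sphere (0:Eucl n) 1 × Ioi (0:ℝ), g p.2
          ∂((volume : Measure (Eucl n)).toSphere.prod
            (.volumeIoiPow (Module.finrank ℝ (Eucl n) - 1))) := by
        rw [← (Measure.measurePreserving_homeomorphUnitSphereProd
          (volume : Measure (Eucl n))).lintegral_comp hmeas]
        simp
    _ = (volume : Measure (Eucl n)).toSphere univ *
          ∫⁻ r : Ioi (0:ℝ), g r
            ∂(Measure.volumeIoiPow (Module.finrank ℝ (Eucl n) - 1)) := by
        rw [lintegral_prod _ hmeas.aemeasurable]
        simp [lintegral_const, mul_comm]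
    _ = (volume : Measure (Eucl n)).toSphere univ *
          ∫⁻ r in Ioi (0:ℝ), ENNReal.ofReal (r ^ (n - 1)) * g r := by
        congr 1
        simp only [Measure.volumeIoiPow, hdim]
        rw [lintegral_withDensity_eq_lintegral_mul _
            ((measurable_subtype_coe.pow_const _).ennreal_ofReal)
            (show Measurable fun r : Ioi (0:ℝ) => g ↑r from hg.comp measurable_subtype_coe)]
        rw [← lintegral_subtype_comap measurableSet_Ioi
          (fun r : ℝ => ENNReal.ofReal (r ^ (n - 1)) * g r)]
        rfl

set_option maxHeartbeats 1000000 in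
/-- If `∫₁^∞ t^{n-1} α(t)⁻² dt < ∞`, then every `w ∈ H^α(ℝⁿ)` (given on the Fourier
side by `W = ŵ`, so `w = 𝓕⁻ W`) has Fourier transform in `L¹`, hence is a bounded
continuous function with `‖w‖_∞ ≤ C ‖w‖_α`. -/
theorem halpha_bounded_continuous (n : ℕ) (hn : 1 ≤ n) (α : ℝ → ℝ) (hα : RO α)
    (hint : IntegrableOn
      (fun t : ℝ => t ^ ((n : ℝ) - 1) * ((α t)⁻¹) ^ 2) (Set.Ici 1)) :
    ∃ C : ℝ, 0 < C ∧ ∀ W : Eucl n → ℂ, Measurable W → HnormE α W < ⊤ →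
      Integrable W ∧ Continuous (𝓕⁻ W) ∧
      ∀ x : Eucl n, ‖(𝓕⁻ W) x‖ ≤ C * (HnormE α W).toReal := by
  classical
  obtain ⟨hpos, hmeasα, -⟩ := id hα
  obtain ⟨c₀, hc₀, hlow⟩ := ro_lower_ratio hα (Real.sqrt 2)
  have hα1 : 0 < α 1 := hpos 1 le_rfl
  -- measurable extension of α
  set β : ℝ → ℝ := fun t => α (max t 1) with hβ
  have hβmeas : Measurable β := by
    have h1 : Measurable fun t : ℝ => (⟨max t 1, show (1:ℝ) ≤ max t 1 from le_max_right _ _⟩ : Set.Ici (1:ℝ)) :=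
      (measurable_id.max measurable_const).subtype_mk
    exact hmeasα.comp h1
  have hβeq : ∀ t, 1 ≤ t → β t = α t := fun t ht => by
    simp only [hβ, max_eq_left ht]
  have hjap1 : ∀ ξ : Eucl n, 1 ≤ jap ξ := by
    intro ξ
    have h1 : Real.sqrt 1 ≤ Real.sqrt (1 + ‖ξ‖ ^ 2) :=
      Real.sqrt_le_sqrt (le_add_of_nonneg_right (by positivity))
    simpa [jap] using h1
  -- the radial weight function
  set g : ℝ → ℝ≥0∞ := fun r => ENNReal.ofReal ((β (Real.sqrt (1 + r ^ 2)))⁻¹ ^ 2) with hg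
  have hsqrtmeas : Measurable fun r : ℝ => Real.sqrt (1 + r ^ 2) :=
    (Real.continuous_sqrt.comp (by continuity)).measurable
  have hgmeas : Measurable g :=
    (((hβmeas.comp hsqrtmeas).inv.pow_const 2)).ennreal_ofReal
  have hgnorm : ∀ ξ : Eucl n, g ‖ξ‖ = ENNReal.ofReal ((α (jap ξ))⁻¹ ^ 2) := by
    intro ξ
    have : Real.sqrt (1 + ‖ξ‖ ^ 2) = jap ξ := rfl
    rw [hg]
    simp only [this, hβeq _ (hjap1 ξ)]
  -- the key finiteness
  set K : ℝ≥0∞ := ∫⁻ ξ : Eucl n, g ‖ξ‖ with hKdef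
  have hsqrt2 : (1:ℝ) ≤ Real.sqrt 2 := by
    rw [show (1:ℝ) = Real.sqrt 1 from (Real.sqrt_one).symm]
    exact Real.sqrt_le_sqrt one_le_two
  have hK : K < ⊤ := by
    rw [hKdef, lintegral_norm_eucl hn g hgmeas]
    have hS : (volume : Measure (Eucl n)).toSphere univ < ⊤ := measure_lt_top _ _
    refine ENNReal.mul_lt_top hS ?_
    have hsplit : Ioi (0:ℝ) = Ioc (0:ℝ) 1 ∪ Ioi 1 := (Ioc_union_Ioi_eq_Ioi zero_le_one).symm
    rw [hsplit, lintegral_union measurableSet_Ioi (Ioc_disjoint_Ioi le_rfl)]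
    refine ENNReal.add_lt_top.2 ⟨?_, ?_⟩
    · -- on (0,1]
      have hb : ∀ r ∈ Ioc (0:ℝ) 1,
          ENNReal.ofReal (r ^ (n - 1)) * g r ≤ ENNReal.ofReal (((c₀ * α 1)⁻¹) ^ 2) := by
        intro r hr
        have hr0 : 0 < r := hr.1
        have ht1 : 1 ≤ Real.sqrt (1 + r ^ 2) := by
          have h1 : Real.sqrt 1 ≤ Real.sqrt (1 + r ^ 2) :=
            Real.sqrt_le_sqrt (le_add_of_nonneg_right (by positivity))
          simpa using h1
        have ht2 : Real.sqrt (1 + r ^ 2) ≤ Real.sqrt 2 := by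
          apply Real.sqrt_le_sqrt
          nlinarith [hr.2, hr0]
        set t := Real.sqrt (1 + r ^ 2)
        have hαt : c₀ * α 1 ≤ α t := by
          have := hlow 1 le_rfl t ht1 ht2
          rwa [mul_one] at this
        have hαtpos : 0 < α t := hpos t ht1
        have hinv : (α t)⁻¹ ≤ (c₀ * α 1)⁻¹ :=
          inv_anti₀ (by positivity) hαt
        have hsq : (α t)⁻¹ ^ 2 ≤ ((c₀ * α 1)⁻¹) ^ 2 := by
          apply pow_le_pow_left₀ (by positivity) hinv
        have h2 : g r ≤ ENNReal.ofReal (((c₀ * α 1)⁻¹) ^ 2) := by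
          rw [hg]
          simp only [hβeq _ ht1]
          exact ENNReal.ofReal_le_ofReal
            (by rw [show β (Real.sqrt (1 + r ^ 2)) = α t from hβeq _ ht1]; exact hsq)
        have h3 : ENNReal.ofReal (r ^ (n - 1)) ≤ 1 := by
          rw [show (1:ℝ≥0∞) = ENNReal.ofReal 1 by simp]
          exact ENNReal.ofReal_le_ofReal (pow_le_one₀ hr0.le hr.2)
        calc ENNReal.ofReal (r ^ (n - 1)) * g r ≤ 1 * ENNReal.ofReal (((c₀ * α 1)⁻¹) ^ 2) :=
              mul_le_mul' h3 h2
          _ = ENNReal.ofReal (((c₀ * α 1)⁻¹) ^ 2) := one_mul _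
      calc ∫⁻ r in Ioc (0:ℝ) 1, ENNReal.ofReal (r ^ (n - 1)) * g r
          ≤ ∫⁻ _ in Ioc (0:ℝ) 1, ENNReal.ofReal (((c₀ * α 1)⁻¹) ^ 2) :=
            setLIntegral_mono' measurableSet_Ioc hb
        _ = ENNReal.ofReal (((c₀ * α 1)⁻¹) ^ 2) * volume (Ioc (0:ℝ) 1) :=
            setLIntegral_const _ _
        _ < ⊤ := ENNReal.mul_lt_top ENNReal.ofReal_lt_top measure_Ioc_lt_top
    · -- on (1,∞)
      have hb : ∀ r ∈ Ioi (1:ℝ),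
          ENNReal.ofReal (r ^ (n - 1)) * g r ≤
            ENNReal.ofReal ((c₀⁻¹) ^ 2) *
              ENNReal.ofReal (r ^ ((n:ℝ) - 1) * ((α r)⁻¹) ^ 2) := by
        intro r hr
        have hr1 : 1 ≤ r := le_of_lt hr
        have hr0 : 0 < r := lt_of_lt_of_le one_pos hr1
        set t := Real.sqrt (1 + r ^ 2) with hts
        have htr : r ≤ t := by
          have h1 : Real.sqrt (r ^ 2) ≤ Real.sqrt (1 + r ^ 2) :=
            Real.sqrt_le_sqrt (by nlinarith)
          rw [Real.sqrt_sq hr0.le] at h1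
          exact h1
        have ht1 : 1 ≤ t := le_trans hr1 htr
        have htub : t ≤ Real.sqrt 2 * r := by
          have h1 : Real.sqrt (1 + r ^ 2) ≤ Real.sqrt (2 * r ^ 2) :=
            Real.sqrt_le_sqrt (by nlinarith)
          rwa [Real.sqrt_mul (by norm_num) _, Real.sqrt_sq hr0.le] at h1
        have hl1 : 1 ≤ t / r := (one_le_div hr0).2 htr
        have hl2 : t / r ≤ Real.sqrt 2 := by
          rw [div_le_iff₀ hr0]; exact htub
        have hαt : c₀ * α r ≤ α t := by
          have := hlow r hr1 (t / r) hl1 hl2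
          rwa [div_mul_cancel₀ _ hr0.ne'] at this
        have hαrpos : 0 < α r := hpos r hr1
        have hαtpos : 0 < α t := hpos t ht1
        have hinv : (α t)⁻¹ ≤ c₀⁻¹ * (α r)⁻¹ := by
          rw [← mul_inv]
          exact inv_anti₀ (by positivity) hαt
        have hsq : (α t)⁻¹ ^ 2 ≤ (c₀⁻¹) ^ 2 * ((α r)⁻¹) ^ 2 := by
          rw [← mul_pow]
          apply pow_le_pow_left₀ (by positivity) hinv
        have hpowcast : r ^ (n - 1) = r ^ ((n:ℝ) - 1) := by
          rw [show (n:ℝ) - 1 = ((n - 1 : ℕ) : ℝ) by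
            rw [Nat.cast_sub hn]; norm_num]
          rw [Real.rpow_natCast]
        have hchain : r ^ (n - 1) * ((α t)⁻¹ ^ 2) ≤
            (c₀⁻¹) ^ 2 * (r ^ ((n:ℝ) - 1) * ((α r)⁻¹) ^ 2) := by
          rw [← hpowcast]
          calc r ^ (n - 1) * ((α t)⁻¹ ^ 2)
              ≤ r ^ (n - 1) * ((c₀⁻¹) ^ 2 * ((α r)⁻¹) ^ 2) := by
                apply mul_le_mul_of_nonneg_left hsq (by positivity)
            _ = (c₀⁻¹) ^ 2 * (r ^ (n - 1) * ((α r)⁻¹) ^ 2) := by ring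
        calc ENNReal.ofReal (r ^ (n - 1)) * g r
            = ENNReal.ofReal (r ^ (n - 1) * ((α t)⁻¹ ^ 2)) := by
              rw [hg]
              simp only [← hts, hβeq _ ht1]
              rw [← ENNReal.ofReal_mul (by positivity)]
          _ ≤ ENNReal.ofReal ((c₀⁻¹) ^ 2 * (r ^ ((n:ℝ) - 1) * ((α r)⁻¹) ^ 2)) :=
              ENNReal.ofReal_le_ofReal hchain
          _ = ENNReal.ofReal ((c₀⁻¹) ^ 2) *
                ENNReal.ofReal (r ^ ((n:ℝ) - 1) * ((α r)⁻¹) ^ 2) :=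
              ENNReal.ofReal_mul (by positivity)
      have htail : ∫⁻ r in Ioi (1:ℝ),
          ENNReal.ofReal (r ^ ((n:ℝ) - 1) * ((α r)⁻¹) ^ 2) < ⊤ := by
        have h1 : ∫⁻ r in Ioi (1:ℝ), ENNReal.ofReal (r ^ ((n:ℝ) - 1) * ((α r)⁻¹) ^ 2)
            ≤ ∫⁻ r in Ici (1:ℝ), ENNReal.ofReal (r ^ ((n:ℝ) - 1) * ((α r)⁻¹) ^ 2) :=
          lintegral_mono_set Ioi_subset_Ici_self
        have h2 : ∫⁻ r in Ici (1:ℝ), ENNReal.ofReal (r ^ ((n:ℝ) - 1) * ((α r)⁻¹) ^ 2)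
            ≤ ∫⁻ r in Ici (1:ℝ), (‖r ^ ((n:ℝ) - 1) * ((α r)⁻¹) ^ 2‖₊ : ℝ≥0∞) :=
          lintegral_mono fun r => Real.ofReal_le_enorm _
        exact lt_of_le_of_lt (le_trans h1 h2) hint.2
      calc ∫⁻ r in Ioi (1:ℝ), ENNReal.ofReal (r ^ (n - 1)) * g r
          ≤ ∫⁻ r in Ioi (1:ℝ), ENNReal.ofReal ((c₀⁻¹) ^ 2) *
              ENNReal.ofReal (r ^ ((n:ℝ) - 1) * ((α r)⁻¹) ^ 2) :=
            setLIntegral_mono' measurableSet_Ioi hb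
        _ = ENNReal.ofReal ((c₀⁻¹) ^ 2) *
              ∫⁻ r in Ioi (1:ℝ), ENNReal.ofReal (r ^ ((n:ℝ) - 1) * ((α r)⁻¹) ^ 2) :=
            lintegral_const_mul' _ _ ENNReal.ofReal_ne_top
        _ < ⊤ := ENNReal.mul_lt_top ENNReal.ofReal_lt_top htail
  -- the constant
  set K2 : ℝ≥0∞ := K ^ (1/2 : ℝ) with hK2def
  have hK2 : K2 < ⊤ := ENNReal.rpow_lt_top_of_nonneg (by norm_num) hK.ne
  refine ⟨max 1 K2.toReal, lt_of_lt_of_le one_pos (le_max_left _ _), fun W hW hWnorm => ?_⟩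
  have hjapmeas : Measurable fun ξ : Eucl n => jap ξ := by
    have : Continuous fun ξ : Eucl n => Real.sqrt (1 + ‖ξ‖ ^ 2) := by
      apply Real.continuous_sqrt.comp
      continuity
    exact this.measurable
  have hαjapmeas : Measurable fun ξ : Eucl n => β (jap ξ) := hβmeas.comp hjapmeas
  have hβjap : ∀ ξ : Eucl n, β (jap ξ) = α (jap ξ) := fun ξ => hβeq _ (hjap1 ξ)
  -- Hölder
  set f1 : Eucl n → ℝ≥0∞ := fun ξ => ENNReal.ofReal ((α (jap ξ))⁻¹) with hf1
  set f2 : Eucl n → ℝ≥0∞ := fun ξ => ENNReal.ofReal (α (jap ξ)) * (‖W ξ‖₊ : ℝ≥0∞) with hf2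
  have hf1meas : AEMeasurable f1 := by
    have : Measurable fun ξ : Eucl n => ENNReal.ofReal ((β (jap ξ))⁻¹) :=
      hαjapmeas.inv.ennreal_ofReal
    refine Measurable.aemeasurable ?_
    have e : f1 = fun ξ : Eucl n => ENNReal.ofReal ((β (jap ξ))⁻¹) := by
      funext ξ
      simp only [hf1, hβjap]
    rw [e]
    exact this
  have hf2meas : AEMeasurable f2 := by
    have h1 : Measurable fun ξ : Eucl n => ENNReal.ofReal (β (jap ξ)) :=
      hαjapmeas.ennreal_ofReal
    have h2 : Measurable fun ξ : Eucl n => (‖W ξ‖₊ : ℝ≥0∞) := hW.nnnorm.coe_nnreal_ennreal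
    refine Measurable.aemeasurable ?_
    have := h1.mul h2
    have e : f2 = (fun ξ : Eucl n => ENNReal.ofReal (β (jap ξ))) *
        fun ξ : Eucl n => (‖W ξ‖₊ : ℝ≥0∞) := by
      funext ξ
      simp only [hf2, Pi.mul_apply, hβjap]
    rw [e]
    exact this
  have hprod : ∀ ξ, (f1 * f2) ξ = (‖W ξ‖₊ : ℝ≥0∞) := by
    intro ξ
    have hαpos : 0 < α (jap ξ) := hpos _ (hjap1 ξ)
    simp only [Pi.mul_apply, hf1, hf2, ← mul_assoc,
      ← ENNReal.ofReal_mul (inv_nonneg.mpr hαpos.le)]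
    rw [inv_mul_cancel₀ hαpos.ne']
    simp
  have hholder : ∫⁻ ξ, (‖W ξ‖₊ : ℝ≥0∞) ≤ K2 * HnormE α W := by
    have hconj : Real.HolderConjugate 2 2 := Real.HolderConjugate.two_two
    have h := ENNReal.lintegral_mul_le_Lp_mul_Lq volume hconj hf1meas hf2meas
    have hl : (∫⁻ ξ, (f1 * f2) ξ) = ∫⁻ ξ, (‖W ξ‖₊ : ℝ≥0∞) := by
      congr 1
      funext ξ
      exact hprod ξ
    have hf1sq : (∫⁻ ξ, f1 ξ ^ (2:ℝ)) = K := by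
      rw [hKdef]
      congr 1
      funext ξ
      rw [hgnorm ξ, hf1]
      rw [show ((2:ℝ)) = ((2:ℕ):ℝ) by norm_num, ENNReal.rpow_natCast,
        ← ENNReal.ofReal_pow (inv_nonneg.mpr (hpos _ (hjap1 ξ)).le)]
    have hf2sq : (∫⁻ ξ, f2 ξ ^ (2:ℝ)) ^ (1/2 : ℝ) = HnormE α W := by
      rw [HnormE]
      congr 1
      apply lintegral_congr
      intro ξ
      have hαpos : 0 < α (jap ξ) := hpos _ (hjap1 ξ)
      rw [hf2, show ((2:ℝ)) = ((2:ℕ):ℝ) by norm_num, ENNReal.rpow_natCast,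
        mul_pow, ← ENNReal.ofReal_pow hαpos.le]
    rw [hl, hf1sq] at h
    calc (∫⁻ ξ, (‖W ξ‖₊ : ℝ≥0∞)) ≤ K ^ (1/2 : ℝ) * (∫⁻ ξ, f2 ξ ^ (2:ℝ)) ^ (1/2 : ℝ) := h
      _ = K2 * HnormE α W := by rw [hK2def, hf2sq]
  have hWint : Integrable W := by
    refine ⟨hW.aestronglyMeasurable, ?_⟩
    exact lt_of_le_of_lt hholder (ENNReal.mul_lt_top hK2 hWnorm)
  refine ⟨hWint, ?_, ?_⟩
  · have hLcont : Continuous fun p : Eucl n × Eucl n => (-innerₗ (Eucl n)) p.1 p.2 := by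
      simp only [LinearMap.neg_apply, innerₗ_apply_apply]
      exact continuous_inner.neg
    exact VectorFourier.fourierIntegral_continuous Real.continuous_fourierChar hLcont hWint
  · intro x
    have hb1 : ‖(𝓕⁻ W) x‖ ≤ ∫ v, ‖W v‖ :=
      VectorFourier.norm_fourierIntegral_le_integral_norm Real.fourierChar volume
        (-innerₗ (Eucl n)) W x
    have hb2 : (∫ v, ‖W v‖) = (∫⁻ v, (‖W v‖₊ : ℝ≥0∞)).toReal :=
      integral_norm_eq_lintegral_enorm hW.aestronglyMeasurable
    have hfin : K2 * HnormE α W ≠ ⊤ := (ENNReal.mul_lt_top hK2 hWnorm).ne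
    have hb3 : (∫⁻ v, (‖W v‖₊ : ℝ≥0∞)).toReal ≤ (K2 * HnormE α W).toReal :=
      ENNReal.toReal_mono hfin hholder
    rw [ENNReal.toReal_mul] at hb3
    have hb4 : K2.toReal * (HnormE α W).toReal ≤ max 1 K2.toReal * (HnormE α W).toReal :=
      mul_le_mul_of_nonneg_right (le_max_right _ _) ENNReal.toReal_nonneg
    rw [hb2] at hb1
    linarith
end
end
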